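/- The LCM matrix [S] = (lcm(x_i, x_j)) of any GCD-closed set S of distinct positive integers with at most 7 elements is invertible. -/

import Mathlib

open scoped Classical
open Finset

set_option maxHeartbeats 1000000

noncomputable def al (S : Finset ℕ) (v : ℕ) : ℚ :=
  1/(v:ℚ) - ∑ u ∈ (S.filter (fun u => u ∣ v ∧ u < v)).attach, al S u.1
termination_by v
decreasing_by exact (Finset.mem_filter.mp u.2).2.2

lemma al_system (S : Finset ℕ) (h0 : 0 ∉ S) {v : ℕ} (hv : v ∈ S) :
    ∑ u ∈ S.filter (· ∣ v), al S u = 1/(v:ℚ) := by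
  have hvpos : 0 < v := Nat.pos_of_ne_zero (by rintro rfl; exact h0 hv)
  have hset : S.filter (· ∣ v) = insert v (S.filter (fun u => u ∣ v ∧ u < v)) := by
    ext u
    simp only [mem_filter, mem_insert]
    constructor
    · rintro ⟨hu, hd⟩
      rcases eq_or_ne u v with rfl | hne
      · exact Or.inl rfl
      · exact Or.inr ⟨hu, hd, lt_of_le_of_ne (Nat.le_of_dvd hvpos hd) hne⟩
    · rintro (rfl | ⟨hu, hd, _⟩)
      · exact ⟨hv, dvd_rfl⟩
      · exact ⟨hu, hd⟩
  rw [hset, Finset.sum_insert (by simp), al, Finset.sum_attach]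
  ring

noncomputable def Mset (S : Finset ℕ) (v : ℕ) : Finset ℕ :=
  S.filter (fun y => y ∣ v ∧ y ≠ v ∧ ∀ z ∈ S, y ∣ z → z ∣ v → z = y ∨ z = v)

lemma exists_max (S : Finset ℕ) (h0 : 0 ∉ S) (v : ℕ) (hv : v ∈ S) :
    ∀ u ∈ S, u ∣ v → u ≠ v → ∃ y ∈ Mset S v, u ∣ y := by
  have hvpos : 0 < v := Nat.pos_of_ne_zero (by rintro rfl; exact h0 hv)
  -- strong induction on v - u
  suffices H : ∀ k : ℕ, ∀ u ∈ S, u ∣ v → u ≠ v → v - u = k → ∃ y ∈ Mset S v, u ∣ y by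
    intro u hu hd hne; exact H (v - u) u hu hd hne rfl
  intro k
  induction k using Nat.strong_induction_on with
  | _ k ih =>
    intro u hu hd hne hk
    by_cases hm : ∀ z ∈ S, u ∣ z → z ∣ v → z = u ∨ z = v
    · exact ⟨u, Finset.mem_filter.mpr ⟨hu, hd, hne, hm⟩, dvd_rfl⟩
    · push_neg at hm
      obtain ⟨z, hz, huz, hzv, hzu, hznv⟩ := hm
      have hupos : 0 < u := Nat.pos_of_ne_zero (by rintro rfl; exact h0 hu)
      have hultz : u < z := lt_of_le_of_ne (Nat.le_of_dvd (Nat.pos_of_ne_zero (by rintro rfl; exact h0 hz)) huz) (fun h => hzu h.symm)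
      have hzlev : z ≤ v := Nat.le_of_dvd hvpos hzv
      obtain ⟨y, hy, hzy⟩ := ih (v - z) (by omega) z hz hzv hznv rfl
      exact ⟨y, hy, huz.trans hzy⟩

lemma Mset_facts (S : Finset ℕ) (v : ℕ) {y : ℕ} (hy : y ∈ Mset S v) :
    y ∈ S ∧ y ∣ v ∧ y ≠ v ∧ ∀ z ∈ S, y ∣ z → z ∣ v → z = y ∨ z = v := by
  simpa [Mset] using hy

lemma Mset_incomp (S : Finset ℕ) (v : ℕ) {y z : ℕ} (hy : y ∈ Mset S v) (hz : z ∈ Mset S v)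
    (hne : y ≠ z) : ¬ y ∣ z := by
  obtain ⟨hyS, hyd, hyv, hymax⟩ := Mset_facts S v hy
  obtain ⟨hzS, hzd, hzv, _⟩ := Mset_facts S v hz
  intro hdvd
  rcases hymax z hzS hdvd hzd with h | h
  · exact hne h.symm
  · exact hzv h

lemma gcdv_mem (S : Finset ℕ) (hg : ∀ a ∈ S, ∀ b ∈ S, Nat.gcd a b ∈ S) (v : ℕ) (hv : v ∈ S)
    {T : Finset ℕ} (hT : ∀ y ∈ T, y ∈ S) : Nat.gcd v (T.gcd id) ∈ S := by
  classical
  induction T using Finset.induction_on with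
  | empty => simpa using hv
  | @insert a T ha ih =>
    have haS : a ∈ S := hT a (Finset.mem_insert_self a T)
    have hrest : Nat.gcd v (T.gcd id) ∈ S := ih (fun y hy => hT y (Finset.mem_insert_of_mem hy))
    have : Nat.gcd v ((insert a T).gcd id) = Nat.gcd a (Nat.gcd v (T.gcd id)) := by
      rw [Finset.gcd_insert]
      show Nat.gcd v (Nat.gcd a (T.gcd id)) = _
      rw [← Nat.gcd_assoc, Nat.gcd_comm v a, Nat.gcd_assoc]
    rw [this]
    exact hg a haS _ hrest

-- generic powerset expansion lemmas
lemma expand1 {β : Type*} [AddCommMonoid β] (f : Finset ℕ → β) (y1 : ℕ) :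
    ∑ T ∈ ({y1} : Finset ℕ).powerset, f T = f ∅ + f {y1} := by
  rw [show ({y1} : Finset ℕ) = insert y1 ∅ from rfl,
    Finset.sum_powerset_insert (by simp)]
  simp

lemma expand2 {β : Type*} [AddCommMonoid β] (f : Finset ℕ → β) (y1 y2 : ℕ) (h12 : y1 ≠ y2) :
    ∑ T ∈ ({y1, y2} : Finset ℕ).powerset, f T
      = (f ∅ + f {y2}) + (f {y1} + f {y1, y2}) := by
  rw [show ({y1, y2} : Finset ℕ) = insert y1 {y2} from rfl,
    Finset.sum_powerset_insert (by simp [h12])]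
  simp only [expand1]
  rfl

lemma expand3 {β : Type*} [AddCommMonoid β] (f : Finset ℕ → β) (y1 y2 y3 : ℕ)
    (h12 : y1 ≠ y2) (h13 : y1 ≠ y3) (h23 : y2 ≠ y3) :
    ∑ T ∈ ({y1, y2, y3} : Finset ℕ).powerset, f T
      = ((f ∅ + f {y3}) + (f {y2} + f {y2, y3})) + ((f {y1} + f {y1, y3}) + (f {y1, y2} + f {y1, y2, y3})) := by
  rw [show ({y1, y2, y3} : Finset ℕ) = insert y1 {y2, y3} from rfl,
    Finset.sum_powerset_insert (by simp [h12, h13])]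
  rw [expand2 _ _ _ h23, expand2 _ _ _ h23]
  rfl

lemma expand4 {β : Type*} [AddCommMonoid β] (f : Finset ℕ → β) (y1 y2 y3 y4 : ℕ)
    (h12 : y1 ≠ y2) (h13 : y1 ≠ y3) (h14 : y1 ≠ y4) (h23 : y2 ≠ y3) (h24 : y2 ≠ y4) (h34 : y3 ≠ y4) :
    ∑ T ∈ ({y1, y2, y3, y4} : Finset ℕ).powerset, f T
      = (((f ∅ + f {y4}) + (f {y3} + f {y3, y4})) + ((f {y2} + f {y2, y4}) + (f {y2, y3} + f {y2, y3, y4})))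
      + (((f {y1} + f {y1, y4}) + (f {y1, y3} + f {y1, y3, y4}))
         + ((f {y1, y2} + f {y1, y2, y4}) + (f {y1, y2, y3} + f {y1, y2, y3, y4}))) := by
  rw [show ({y1, y2, y3, y4} : Finset ℕ) = insert y1 {y2, y3, y4} from rfl,
    Finset.sum_powerset_insert (by simp [h12, h13, h14])]
  rw [expand3 _ _ _ _ h23 h24 h34, expand3 _ _ _ _ h23 h24 h34]
  rfl

lemma expand5 {β : Type*} [AddCommMonoid β] (f : Finset ℕ → β) (y1 y2 y3 y4 y5 : ℕ)
    (h12 : y1 ≠ y2) (h13 : y1 ≠ y3) (h14 : y1 ≠ y4) (h15 : y1 ≠ y5) (h23 : y2 ≠ y3)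
    (h24 : y2 ≠ y4) (h25 : y2 ≠ y5) (h34 : y3 ≠ y4) (h35 : y3 ≠ y5) (h45 : y4 ≠ y5) :
    ∑ T ∈ ({y1, y2, y3, y4, y5} : Finset ℕ).powerset, f T
      = ((((f ∅ + f {y5}) + (f {y4} + f {y4, y5})) + ((f {y3} + f {y3, y5}) + (f {y3, y4} + f {y3, y4, y5})))
      + (((f {y2} + f {y2, y5}) + (f {y2, y4} + f {y2, y4, y5}))
         + ((f {y2, y3} + f {y2, y3, y5}) + (f {y2, y3, y4} + f {y2, y3, y4, y5}))))
      + ((((f {y1} + f {y1, y5}) + (f {y1, y4} + f {y1, y4, y5})) + ((f {y1, y3} + f {y1, y3, y5}) + (f {y1, y3, y4} + f {y1, y3, y4, y5})))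
      + (((f {y1, y2} + f {y1, y2, y5}) + (f {y1, y2, y4} + f {y1, y2, y4, y5}))
         + ((f {y1, y2, y3} + f {y1, y2, y3, y5}) + (f {y1, y2, y3, y4} + f {y1, y2, y3, y4, y5})))) := by
  rw [show ({y1, y2, y3, y4, y5} : Finset ℕ) = insert y1 {y2, y3, y4, y5} from rfl,
    Finset.sum_powerset_insert (by simp [h12, h13, h14, h15])]
  rw [expand4 _ _ _ _ _ h23 h24 h25 h34 h35 h45, expand4 _ _ _ _ _ h23 h24 h25 h34 h35 h45]
  rfl

lemma al_eq_ie (S : Finset ℕ) (h0 : 0 ∉ S) (hg : ∀ a ∈ S, ∀ b ∈ S, Nat.gcd a b ∈ S)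
    {v : ℕ} (hv : v ∈ S) :
    al S v = ∑ T ∈ (Mset S v).powerset,
      (-1:ℚ)^T.card * (1/((Nat.gcd v (T.gcd id) : ℕ) : ℚ)) := by
  have hvpos : 0 < v := Nat.pos_of_ne_zero (by rintro rfl; exact h0 hv)
  set M := Mset S v with hM
  -- rewrite each 1/G T as a sum of al over divisors of G T
  have step1 : ∀ T ∈ M.powerset,
      (-1:ℚ)^T.card * (1/((Nat.gcd v (T.gcd id) : ℕ) : ℚ))
      = (-1:ℚ)^T.card * ∑ u ∈ S, (if u ∣ Nat.gcd v (T.gcd id) then al S u else 0) := by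
    intro T hT
    have hTS : ∀ y ∈ T, y ∈ S := fun y hy =>
      (Mset_facts S v (Finset.mem_powerset.mp hT hy)).1
    have hmem : Nat.gcd v (T.gcd id) ∈ S := gcdv_mem S hg v hv hTS
    rw [← al_system S h0 hmem, Finset.sum_filter]
  rw [Finset.sum_congr rfl step1]
  -- swap sums
  have swap : ∑ T ∈ M.powerset, (-1:ℚ)^T.card * ∑ u ∈ S, (if u ∣ Nat.gcd v (T.gcd id) then al S u else 0)
      = ∑ u ∈ S, al S u * ∑ T ∈ M.powerset, (-1:ℚ)^T.card * (if u ∣ Nat.gcd v (T.gcd id) then 1 else 0) := by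
    simp_rw [Finset.mul_sum]
    rw [Finset.sum_comm]
    refine Finset.sum_congr rfl (fun u hu => ?_)
    refine Finset.sum_congr rfl (fun T hT => ?_)
    by_cases h : u ∣ Nat.gcd v (T.gcd id) <;> simp [h] <;> ring
  rw [swap]
  -- inner sum is the delta function at v
  have inner : ∀ u ∈ S,
      (∑ T ∈ M.powerset, (-1:ℚ)^T.card * (if u ∣ Nat.gcd v (T.gcd id) then 1 else 0))
      = if u = v then 1 else 0 := by
    intro u hu
    by_cases huv : u ∣ v
    · -- indicator via product expansion
      have hsplit : ∀ T ∈ M.powerset, (-1:ℚ)^T.card * (if u ∣ Nat.gcd v (T.gcd id) then 1 else 0)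
          = (∏ y ∈ T, -(if u ∣ y then (1:ℚ) else 0)) * ∏ y ∈ M \ T, 1 := by
        intro T hT
        have : (u ∣ Nat.gcd v (T.gcd id)) ↔ ∀ y ∈ T, u ∣ y := by
          rw [Nat.dvd_gcd_iff]
          constructor
          · rintro ⟨-, h2⟩ y hy
            exact (Finset.dvd_gcd_iff.mp h2) y hy
          · intro h
            exact ⟨huv, Finset.dvd_gcd_iff.mpr h⟩
        rw [Finset.prod_const_one, mul_one]
        simp only [this]
        have h1 : ∏ y ∈ T, -(if u ∣ y then (1:ℚ) else 0)
            = ((-1:ℚ)^T.card) * ∏ y ∈ T, (if u ∣ y then (1:ℚ) else 0) := by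
          calc ∏ y ∈ T, -(if u ∣ y then (1:ℚ) else 0)
              = ∏ y ∈ T, ((-1) * (if u ∣ y then (1:ℚ) else 0)) :=
                Finset.prod_congr rfl (fun y _ => (neg_one_mul _).symm)
            _ = (∏ _y ∈ T, (-1:ℚ)) * ∏ y ∈ T, (if u ∣ y then (1:ℚ) else 0) :=
                Finset.prod_mul_distrib
            _ = ((-1:ℚ)^T.card) * ∏ y ∈ T, (if u ∣ y then (1:ℚ) else 0) := by
                rw [Finset.prod_const]
        rw [h1, Finset.prod_boole]
      rw [Finset.sum_congr rfl hsplit, ← Finset.prod_add]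
      by_cases huveq : u = v
      · subst huveq
        have hfac : ∀ y ∈ M, -(if u ∣ y then (1:ℚ) else 0) + 1 = 1 := by
          intro y hy
          obtain ⟨hyS, hyd, hyv, -⟩ := Mset_facts S u hy
          have : ¬ u ∣ y := fun h => hyv (Nat.dvd_antisymm hyd h)
          simp [this]
        rw [Finset.prod_congr rfl hfac, Finset.prod_const_one]
        simp
      · obtain ⟨y, hy, huy⟩ := exists_max S h0 v hv u hu huv huveq
        rw [Finset.prod_eq_zero hy (by simp [huy])]
        simp [huveq]
    · -- all terms vanish
      have : ∀ T ∈ M.powerset, (-1:ℚ)^T.card * (if u ∣ Nat.gcd v (T.gcd id) then 1 else 0) = 0 := by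
        intro T hT
        have : ¬ u ∣ Nat.gcd v (T.gcd id) := fun h => huv (h.trans (Nat.gcd_dvd_left _ _))
        simp [this]
      rw [Finset.sum_congr rfl this, Finset.sum_const_zero]
      have : u ≠ v := fun h => huv (h ▸ dvd_rfl)
      simp [this]
  rw [Finset.sum_congr rfl (fun u hu => by rw [inner u hu])]
  rw [Finset.sum_eq_single_of_mem v hv (fun u hu hne => by simp [hne])]
  simp

-- reciprocal inequality
lemma recip_le {a b : ℕ} (ha : 0 < a) (hd : a ∣ b) (hne : a ≠ b) :
    2 * (1/(b:ℚ)) ≤ 1/(a:ℚ) := by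
  rcases Nat.eq_zero_or_pos b with rfl | hb
  · simp
  · have h2 : 2 * a ≤ b := by
      obtain ⟨k, rfl⟩ := hd
      rcases k with _ | _ | k
      · omega
      · omega
      · nlinarith
    have hb2 : (0:ℚ) < (a:ℚ) := by exact_mod_cast ha
    have hbb : (0:ℚ) < (b:ℚ) := by exact_mod_cast hb
    have hcast : (2:ℚ) * (a:ℚ) ≤ (b:ℚ) := by exact_mod_cast h2
    have e1 : 1/(b:ℚ) ≤ 1/(2*(a:ℚ)) := one_div_le_one_div_of_le (by positivity) hcast
    have e2 : 2 * (1/(2*(a:ℚ))) = 1/(a:ℚ) := by field_simp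
    linarith

lemma recip_pos {a : ℕ} (ha : 0 < a) : 0 < 1/(a:ℚ) := by positivity

-- an 8-element subset contradiction helper
lemma card8 {S : Finset ℕ} (hcard : S.card ≤ 7) {x1 x2 x3 x4 x5 x6 x7 x8 : ℕ}
    (m1 : x1 ∈ S) (m2 : x2 ∈ S) (m3 : x3 ∈ S) (m4 : x4 ∈ S) (m5 : x5 ∈ S) (m6 : x6 ∈ S)
    (m7 : x7 ∈ S) (m8 : x8 ∈ S)
    (d12 : x1 ≠ x2) (d13 : x1 ≠ x3) (d14 : x1 ≠ x4) (d15 : x1 ≠ x5) (d16 : x1 ≠ x6) (d17 : x1 ≠ x7) (d18 : x1 ≠ x8)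
    (d23 : x2 ≠ x3) (d24 : x2 ≠ x4) (d25 : x2 ≠ x5) (d26 : x2 ≠ x6) (d27 : x2 ≠ x7) (d28 : x2 ≠ x8)
    (d34 : x3 ≠ x4) (d35 : x3 ≠ x5) (d36 : x3 ≠ x6) (d37 : x3 ≠ x7) (d38 : x3 ≠ x8)
    (d45 : x4 ≠ x5) (d46 : x4 ≠ x6) (d47 : x4 ≠ x7) (d48 : x4 ≠ x8)
    (d56 : x5 ≠ x6) (d57 : x5 ≠ x7) (d58 : x5 ≠ x8)
    (d67 : x6 ≠ x7) (d68 : x6 ≠ x8)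
    (d78 : x7 ≠ x8) : False := by
  have hsub : ({x1,x2,x3,x4,x5,x6,x7,x8} : Finset ℕ) ⊆ S := by
    intro t ht
    simp only [Finset.mem_insert, Finset.mem_singleton] at ht
    rcases ht with rfl|rfl|rfl|rfl|rfl|rfl|rfl|rfl <;> assumption
  have h8 : ({x1,x2,x3,x4,x5,x6,x7,x8} : Finset ℕ).card = 8 := by
    repeat rw [Finset.card_insert_of_notMem (by simp_all)]
    simp
  have := Finset.card_le_card hsub
  omega

lemma case3 (S : Finset ℕ) (h0 : 0 ∉ S) (hg : ∀ a ∈ S, ∀ b ∈ S, Nat.gcd a b ∈ S)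
    (hcard : S.card ≤ 7) (v y1 y2 y3 : ℕ) (hv : v ∈ S)
    (h1 : y1 ∈ S) (h2 : y2 ∈ S) (h3 : y3 ∈ S)
    (hd1 : y1 ∣ v) (hd2 : y2 ∣ v) (hd3 : y3 ∣ v)
    (hne1 : y1 ≠ v) (hne2 : y2 ≠ v) (hne3 : y3 ≠ v)
    (nd12 : ¬ y1 ∣ y2) (nd21 : ¬ y2 ∣ y1) (nd13 : ¬ y1 ∣ y3) (nd31 : ¬ y3 ∣ y1)
    (nd23 : ¬ y2 ∣ y3) (nd32 : ¬ y3 ∣ y2) :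
    1/(v:ℚ) - 1/(y1:ℚ) - 1/(y2:ℚ) - 1/(y3:ℚ)
      + 1/((Nat.gcd y1 y2 : ℕ):ℚ) + 1/((Nat.gcd y1 y3 : ℕ):ℚ) + 1/((Nat.gcd y2 y3 : ℕ):ℚ)
      - 1/((Nat.gcd y1 (Nat.gcd y2 y3) : ℕ):ℚ) ≠ 0 := by
  have hvpos : 0 < v := Nat.pos_of_ne_zero (by rintro rfl; exact h0 hv)
  have hp1 : 0 < y1 := Nat.pos_of_ne_zero (by rintro rfl; exact h0 h1)
  have hp2 : 0 < y2 := Nat.pos_of_ne_zero (by rintro rfl; exact h0 h2)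
  have hp3 : 0 < y3 := Nat.pos_of_ne_zero (by rintro rfl; exact h0 h3)
  set g12 := Nat.gcd y1 y2 with hg12
  set g13 := Nat.gcd y1 y3 with hg13
  set g23 := Nat.gcd y2 y3 with hg23
  set G := Nat.gcd y1 (Nat.gcd y2 y3) with hG
  have pg12 : 0 < g12 := Nat.gcd_pos_of_pos_left _ hp1
  have pg13 : 0 < g13 := Nat.gcd_pos_of_pos_left _ hp1
  have pg23 : 0 < g23 := Nat.gcd_pos_of_pos_left _ hp2
  have pG : 0 < G := Nat.gcd_pos_of_pos_left _ hp1
  have m12 : g12 ∈ S := hg _ h1 _ h2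
  have m13 : g13 ∈ S := hg _ h1 _ h3
  have m23 : g23 ∈ S := hg _ h2 _ h3
  have mG : G ∈ S := hg _ h1 _ (hg _ h2 _ h3)
  have d12a : g12 ∣ y1 := Nat.gcd_dvd_left _ _
  have d12b : g12 ∣ y2 := Nat.gcd_dvd_right _ _
  have d13a : g13 ∣ y1 := Nat.gcd_dvd_left _ _
  have d13b : g13 ∣ y3 := Nat.gcd_dvd_right _ _
  have d23a : g23 ∣ y2 := Nat.gcd_dvd_left _ _
  have d23b : g23 ∣ y3 := Nat.gcd_dvd_right _ _
  have dG1 : G ∣ y1 := Nat.gcd_dvd_left _ _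
  have dG2 : G ∣ y2 := (Nat.gcd_dvd_right _ _).trans (Nat.gcd_dvd_left _ _)
  have dG3 : G ∣ y3 := (Nat.gcd_dvd_right _ _).trans (Nat.gcd_dvd_right _ _)
  have dG12 : G ∣ g12 := Nat.dvd_gcd dG1 dG2
  have dG13 : G ∣ g13 := Nat.dvd_gcd dG1 dG3
  have dG23 : G ∣ g23 := Nat.dvd_gcd dG2 dG3
  have n12y1 : g12 ≠ y1 := fun h => nd12 (h ▸ d12b)
  have n12y2 : g12 ≠ y2 := fun h => nd21 (h ▸ d12a)
  have n13y1 : g13 ≠ y1 := fun h => nd13 (h ▸ d13b)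
  have n13y3 : g13 ≠ y3 := fun h => nd31 (h ▸ d13a)
  have n23y2 : g23 ≠ y2 := fun h => nd23 (h ▸ d23b)
  have n23y3 : g23 ≠ y3 := fun h => nd32 (h ▸ d23a)
  have nGy1 : G ≠ y1 := fun h => nd12 (h ▸ dG2)
  have nGy2 : G ≠ y2 := fun h => nd21 (h ▸ dG1)
  have nGy3 : G ≠ y3 := fun h => nd31 (h ▸ dG1)
  -- forcing lemmas
  have force12 : g12 ∣ y3 → g12 = G := fun h =>
    Nat.dvd_antisymm (Nat.dvd_gcd d12a (Nat.dvd_gcd d12b h)) dG12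
  have force13 : g13 ∣ y2 → g13 = G := fun h =>
    Nat.dvd_antisymm (Nat.dvd_gcd d13a (Nat.dvd_gcd h d13b)) dG13
  have force23 : g23 ∣ y1 → g23 = G := fun h =>
    Nat.dvd_antisymm (Nat.dvd_gcd h (Nat.dvd_gcd d23a d23b)) dG23
  -- reciprocal facts
  have r12a := recip_le pg12 d12a n12y1
  have r12b := recip_le pg12 d12b n12y2
  have r13a := recip_le pg13 d13a n13y1
  have r13b := recip_le pg13 d13b n13y3
  have r23a := recip_le pg23 d23a n23y2
  have r23b := recip_le pg23 d23b n23y3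
  have rG1 := recip_le pG dG1 nGy1
  have rG2 := recip_le pG dG2 nGy2
  have rG3 := recip_le pG dG3 nGy3
  have pv := recip_pos hvpos
  have p1 := recip_pos hp1
  have p2 := recip_pos hp2
  have p3 := recip_pos hp3
  by_cases e12 : g12 = G <;> by_cases e13 : g13 = G <;> by_cases e23 : g23 = G
  · refine ne_of_gt ?_
    have q12 : (1:ℚ)/(g12:ℚ) = 1/(G:ℚ) := by rw [e12]
    have q13 : (1:ℚ)/(g13:ℚ) = 1/(G:ℚ) := by rw [e13]
    have q23 : (1:ℚ)/(g23:ℚ) = 1/(G:ℚ) := by rw [e23]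
    linarith
  · refine ne_of_gt ?_
    have q12 : (1:ℚ)/(g12:ℚ) = 1/(G:ℚ) := by rw [e12]
    have q13 : (1:ℚ)/(g13:ℚ) = 1/(G:ℚ) := by rw [e13]
    linarith
  · refine ne_of_gt ?_
    have q12 : (1:ℚ)/(g12:ℚ) = 1/(G:ℚ) := by rw [e12]
    have q23 : (1:ℚ)/(g23:ℚ) = 1/(G:ℚ) := by rw [e23]
    linarith
  · refine ne_of_gt ?_
    have q12 : (1:ℚ)/(g12:ℚ) = 1/(G:ℚ) := by rw [e12]
    linarith
  · refine ne_of_gt ?_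
    have q13 : (1:ℚ)/(g13:ℚ) = 1/(G:ℚ) := by rw [e13]
    have q23 : (1:ℚ)/(g23:ℚ) = 1/(G:ℚ) := by rw [e23]
    linarith
  · refine ne_of_gt ?_
    have q13 : (1:ℚ)/(g13:ℚ) = 1/(G:ℚ) := by rw [e13]
    linarith
  · refine ne_of_gt ?_
    have q23 : (1:ℚ)/(g23:ℚ) = 1/(G:ℚ) := by rw [e23]
    linarith
  · -- all distinct: cardinality contradiction
    exfalso
    have n1213 : g12 ≠ g13 := fun h => e12 (force12 (h ▸ d13b))
    have n1223 : g12 ≠ g23 := by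
      intro h
      exact e12 (Nat.dvd_antisymm (Nat.dvd_gcd d12a (Nat.dvd_gcd d12b (h ▸ d23b))) dG12)
    have n1323 : g13 ≠ g23 := by
      intro h
      exact e13 (Nat.dvd_antisymm (Nat.dvd_gcd d13a (Nat.dvd_gcd (h ▸ d23a) d13b)) dG13)
    have nv12 : v ≠ g12 := fun h => hne1 (Nat.dvd_antisymm hd1 (h ▸ d12a))
    have nv13 : v ≠ g13 := fun h => hne1 (Nat.dvd_antisymm hd1 (h ▸ d13a))
    have nv23 : v ≠ g23 := fun h => hne2 (Nat.dvd_antisymm hd2 (h ▸ d23a))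
    have nvG : v ≠ G := fun h => hne1 (Nat.dvd_antisymm hd1 (h ▸ dG1))
    have n12y3 : g12 ≠ y3 := fun h => nd31 (h ▸ d12a)
    have n13y2 : g13 ≠ y2 := fun h => nd21 (h ▸ d13a)
    have n23y1 : g23 ≠ y1 := fun h => nd12 (h ▸ d23a)
    exact card8 hcard hv h1 h2 h3 m12 m13 m23 mG
      (fun h => hne1 h.symm) (fun h => hne2 h.symm) (fun h => hne3 h.symm) nv12 nv13 nv23 nvG
      (fun h => nd12 (h ▸ dvd_rfl)) (fun h => nd13 (h ▸ dvd_rfl)) (fun h => n12y1 h.symm)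
      (fun h => n13y1 h.symm) (fun h => n23y1 h.symm) (fun h => nGy1 h.symm)
      (fun h => nd23 (h ▸ dvd_rfl)) (fun h => n12y2 h.symm) (fun h => n13y2 h.symm)
      (fun h => n23y2 h.symm) (fun h => nGy2 h.symm)
      (fun h => n12y3 h.symm) (fun h => n13y3 h.symm) (fun h => n23y3 h.symm) (fun h => nGy3 h.symm)
      n1213 n1223 e12 n1323 e13 e23

/-- Core estimate for m = 4, witness a pair-gcd value `a = q12 ≠ b`. -/
lemma m4pair (v y1 y2 y3 y4 a b g13 g14 g23 g24 g34 t123 t124 t134 t234 : ℕ)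
    (hvpos : 0 < v) (hp1 : 0 < y1) (hp2 : 0 < y2) (hp3 : 0 < y3) (hp4 : 0 < y4)
    (ha1 : a ∣ y1) (ha2 : a ∣ y2)
    (hany1 : a ≠ y1) (hany2 : a ≠ y2) (hany3 : a ≠ y3) (hany4 : a ≠ y4)
    (hb1 : b ∣ y1) (hb2 : b ∣ y2) (hb3 : b ∣ y3) (hb4 : b ∣ y4)
    (hbny1 : b ≠ y1) (hbny2 : b ≠ y2) (hbny3 : b ≠ y3) (hbny4 : b ≠ y4)
    (hbuniv : ∀ w, w ∣ y1 → w ∣ y2 → w ∣ y3 → w ∣ y4 → w ∣ b)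
    (hab : a ≠ b) (hba : b ∣ a)
    (hd13a : g13 ∣ y1) (hd13b : g13 ∣ y3) (hu13 : ∀ w, w ∣ y1 → w ∣ y3 → w ∣ g13) (htw13 : g13 = a ∨ g13 = b)
    (hd14a : g14 ∣ y1) (hd14b : g14 ∣ y4) (hu14 : ∀ w, w ∣ y1 → w ∣ y4 → w ∣ g14) (htw14 : g14 = a ∨ g14 = b)
    (hd23a : g23 ∣ y2) (hd23b : g23 ∣ y3) (hu23 : ∀ w, w ∣ y2 → w ∣ y3 → w ∣ g23) (htw23 : g23 = a ∨ g23 = b)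
    (hd24a : g24 ∣ y2) (hd24b : g24 ∣ y4) (hu24 : ∀ w, w ∣ y2 → w ∣ y4 → w ∣ g24) (htw24 : g24 = a ∨ g24 = b)
    (hd34a : g34 ∣ y3) (hd34b : g34 ∣ y4) (hu34 : ∀ w, w ∣ y3 → w ∣ y4 → w ∣ g34) (htw34 : g34 = a ∨ g34 = b)
    (hd123 : t123 ∣ y3) (hu123 : ∀ w, w ∣ y1 → w ∣ y2 → w ∣ y3 → w ∣ t123) (htw123 : t123 = a ∨ t123 = b)
    (hd124 : t124 ∣ y4) (hu124 : ∀ w, w ∣ y1 → w ∣ y2 → w ∣ y4 → w ∣ t124) (htw124 : t124 = a ∨ t124 = b)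
    (hd134 : t134 ∣ y4) (hd134c : t134 ∣ y3) (hu134 : ∀ w, w ∣ y1 → w ∣ y3 → w ∣ y4 → w ∣ t134) (htw134 : t134 = a ∨ t134 = b)
    (hd234 : t234 ∣ y4) (hd234c : t234 ∣ y3) (hu234 : ∀ w, w ∣ y2 → w ∣ y3 → w ∣ y4 → w ∣ t234) (htw234 : t234 = a ∨ t234 = b) :
    1/(v:ℚ) - 1/(y1:ℚ) - 1/(y2:ℚ) - 1/(y3:ℚ) - 1/(y4:ℚ)
      + 1/(a:ℚ) + 1/(g13:ℚ) + 1/(g14:ℚ) + 1/(g23:ℚ) + 1/(g24:ℚ) + 1/(g34:ℚ)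
      - 1/(t123:ℚ) - 1/(t124:ℚ) - 1/(t134:ℚ) - 1/(t234:ℚ) + 1/(b:ℚ) ≠ 0 := by
  have hpa : 0 < a := Nat.pos_of_dvd_of_pos ha1 hp1
  have hpb : 0 < b := Nat.pos_of_dvd_of_pos hb1 hp1
  have val : ∀ q : ℕ, (q = a ∨ q = b) → a ∣ q → q = a := by
    rintro q (rfl | rfl) h
    · rfl
    · exact absurd (Nat.dvd_antisymm h hba) hab
  have val' : ∀ q yk : ℕ, (q = a ∨ q = b) → ¬ a ∣ yk → q ∣ yk → q = b := by
    rintro q yk (rfl | rfl) hn h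
    · exact absurd h hn
    · rfl
  have rA1 := recip_le hpa ha1 hany1
  have rA2 := recip_le hpa ha2 hany2
  have rB1 := recip_le hpb hb1 hbny1
  have rB2 := recip_le hpb hb2 hbny2
  have rB3 := recip_le hpb hb3 hbny3
  have rB4 := recip_le hpb hb4 hbny4
  have pv := recip_pos hvpos
  have p1 := recip_pos hp1
  have p2 := recip_pos hp2
  have p3 := recip_pos hp3
  have p4 := recip_pos hp4
  have qcast : ∀ q r : ℕ, q = r → (1:ℚ)/(q:ℚ) = 1/(r:ℚ) := by rintro q r rfl; rfl
  by_cases h3 : a ∣ y3 <;> by_cases h4 : a ∣ y4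
  · exact absurd (Nat.dvd_antisymm (hbuniv a ha1 ha2 h3 h4) hba) hab
  · -- a ∣ y3 only
    have rA3 := recip_le hpa h3 hany3
    have e13 := qcast _ _ (val g13 htw13 (hu13 a ha1 h3))
    have e23 := qcast _ _ (val g23 htw23 (hu23 a ha2 h3))
    have e123 := qcast _ _ (val t123 htw123 (hu123 a ha1 ha2 h3))
    have e14 := qcast _ _ (val' g14 y4 htw14 h4 hd14b)
    have e24 := qcast _ _ (val' g24 y4 htw24 h4 hd24b)
    have e34 := qcast _ _ (val' g34 y4 htw34 h4 hd34b)
    have e124 := qcast _ _ (val' t124 y4 htw124 h4 hd124)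
    have e134 := qcast _ _ (val' t134 y4 htw134 h4 hd134)
    have e234 := qcast _ _ (val' t234 y4 htw234 h4 hd234)
    refine ne_of_gt ?_
    linarith
  · -- a ∣ y4 only
    have rA4 := recip_le hpa h4 hany4
    have e14 := qcast _ _ (val g14 htw14 (hu14 a ha1 h4))
    have e24 := qcast _ _ (val g24 htw24 (hu24 a ha2 h4))
    have e124 := qcast _ _ (val t124 htw124 (hu124 a ha1 ha2 h4))
    have e13 := qcast _ _ (val' g13 y3 htw13 h3 hd13b)
    have e23 := qcast _ _ (val' g23 y3 htw23 h3 hd23b)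
    have e34 := qcast _ _ (val' g34 y3 htw34 h3 hd34a)
    have e123 := qcast _ _ (val' t123 y3 htw123 h3 hd123)
    have e134 := qcast _ _ (val' t134 y3 htw134 h3 hd134c)
    have e234 := qcast _ _ (val' t234 y3 htw234 h3 hd234c)
    refine ne_of_gt ?_
    linarith
  · -- neither
    have e13 := qcast _ _ (val' g13 y3 htw13 h3 hd13b)
    have e23 := qcast _ _ (val' g23 y3 htw23 h3 hd23b)
    have e34 := qcast _ _ (val' g34 y3 htw34 h3 hd34a)
    have e123 := qcast _ _ (val' t123 y3 htw123 h3 hd123)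
    have e14 := qcast _ _ (val' g14 y4 htw14 h4 hd14b)
    have e24 := qcast _ _ (val' g24 y4 htw24 h4 hd24b)
    have e124 := qcast _ _ (val' t124 y4 htw124 h4 hd124)
    have e134 := qcast _ _ (val' t134 y4 htw134 h4 hd134)
    have e234 := qcast _ _ (val' t234 y4 htw234 h4 hd234)
    refine ne_of_gt ?_
    linarith

/-- Core estimate for m = 4, witness a triple-gcd value `a = t123 ≠ b`. -/
lemma m4triple (v y1 y2 y3 y4 a b g12 g13 g14 g23 g24 g34 t124 t134 t234 : ℕ)
    (hvpos : 0 < v) (hp1 : 0 < y1) (hp2 : 0 < y2) (hp3 : 0 < y3) (hp4 : 0 < y4)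
    (ha1 : a ∣ y1) (ha2 : a ∣ y2) (ha3 : a ∣ y3)
    (hany1 : a ≠ y1) (hany2 : a ≠ y2) (hany3 : a ≠ y3)
    (hb1 : b ∣ y1) (hb2 : b ∣ y2) (hb3 : b ∣ y3) (hb4 : b ∣ y4)
    (hbny1 : b ≠ y1) (hbny2 : b ≠ y2) (hbny3 : b ≠ y3) (hbny4 : b ≠ y4)
    (hbuniv : ∀ w, w ∣ y1 → w ∣ y2 → w ∣ y3 → w ∣ y4 → w ∣ b)
    (hab : a ≠ b) (hba : b ∣ a)
    (hd12a : g12 ∣ y1) (hd12b : g12 ∣ y2) (hu12 : ∀ w, w ∣ y1 → w ∣ y2 → w ∣ g12) (htw12 : g12 = a ∨ g12 = b)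
    (hd13a : g13 ∣ y1) (hd13b : g13 ∣ y3) (hu13 : ∀ w, w ∣ y1 → w ∣ y3 → w ∣ g13) (htw13 : g13 = a ∨ g13 = b)
    (hd14a : g14 ∣ y1) (hd14b : g14 ∣ y4) (hu14 : ∀ w, w ∣ y1 → w ∣ y4 → w ∣ g14) (htw14 : g14 = a ∨ g14 = b)
    (hd23a : g23 ∣ y2) (hd23b : g23 ∣ y3) (hu23 : ∀ w, w ∣ y2 → w ∣ y3 → w ∣ g23) (htw23 : g23 = a ∨ g23 = b)
    (hd24a : g24 ∣ y2) (hd24b : g24 ∣ y4) (hu24 : ∀ w, w ∣ y2 → w ∣ y4 → w ∣ g24) (htw24 : g24 = a ∨ g24 = b)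
    (hd34a : g34 ∣ y3) (hd34b : g34 ∣ y4) (hu34 : ∀ w, w ∣ y3 → w ∣ y4 → w ∣ g34) (htw34 : g34 = a ∨ g34 = b)
    (hd124 : t124 ∣ y4) (hu124 : ∀ w, w ∣ y1 → w ∣ y2 → w ∣ y4 → w ∣ t124) (htw124 : t124 = a ∨ t124 = b)
    (hd134 : t134 ∣ y4) (hu134 : ∀ w, w ∣ y1 → w ∣ y3 → w ∣ y4 → w ∣ t134) (htw134 : t134 = a ∨ t134 = b)
    (hd234 : t234 ∣ y4) (hu234 : ∀ w, w ∣ y2 → w ∣ y3 → w ∣ y4 → w ∣ t234) (htw234 : t234 = a ∨ t234 = b) :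
    1/(v:ℚ) - 1/(y1:ℚ) - 1/(y2:ℚ) - 1/(y3:ℚ) - 1/(y4:ℚ)
      + 1/(g12:ℚ) + 1/(g13:ℚ) + 1/(g14:ℚ) + 1/(g23:ℚ) + 1/(g24:ℚ) + 1/(g34:ℚ)
      - 1/(a:ℚ) - 1/(t124:ℚ) - 1/(t134:ℚ) - 1/(t234:ℚ) + 1/(b:ℚ) ≠ 0 := by
  have hpa : 0 < a := Nat.pos_of_dvd_of_pos ha1 hp1
  have hpb : 0 < b := Nat.pos_of_dvd_of_pos hb1 hp1
  have val : ∀ q : ℕ, (q = a ∨ q = b) → a ∣ q → q = a := by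
    rintro q (rfl | rfl) h
    · rfl
    · exact absurd (Nat.dvd_antisymm h hba) hab
  have val' : ∀ q yk : ℕ, (q = a ∨ q = b) → ¬ a ∣ yk → q ∣ yk → q = b := by
    rintro q yk (rfl | rfl) hn h
    · exact absurd h hn
    · rfl
  have rA1 := recip_le hpa ha1 hany1
  have rA2 := recip_le hpa ha2 hany2
  have rA3 := recip_le hpa ha3 hany3
  have rB4 := recip_le hpb hb4 hbny4
  have pv := recip_pos hvpos
  have p1 := recip_pos hp1
  have p2 := recip_pos hp2
  have p3 := recip_pos hp3
  have p4 := recip_pos hp4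
  have qcast : ∀ q r : ℕ, q = r → (1:ℚ)/(q:ℚ) = 1/(r:ℚ) := by rintro q r rfl; rfl
  by_cases h4 : a ∣ y4
  · exact absurd (Nat.dvd_antisymm (hbuniv a ha1 ha2 ha3 h4) hba) hab
  · have e12 := qcast _ _ (val g12 htw12 (hu12 a ha1 ha2))
    have e13 := qcast _ _ (val g13 htw13 (hu13 a ha1 ha3))
    have e23 := qcast _ _ (val g23 htw23 (hu23 a ha2 ha3))
    have e14 := qcast _ _ (val' g14 y4 htw14 h4 hd14b)
    have e24 := qcast _ _ (val' g24 y4 htw24 h4 hd24b)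
    have e34 := qcast _ _ (val' g34 y4 htw34 h4 hd34b)
    have e124 := qcast _ _ (val' t124 y4 htw124 h4 hd124)
    have e134 := qcast _ _ (val' t134 y4 htw134 h4 hd134)
    have e234 := qcast _ _ (val' t234 y4 htw234 h4 hd234)
    refine ne_of_gt ?_
    linarith

set_option maxHeartbeats 2000000 in
lemma case4 (S : Finset ℕ) (h0 : 0 ∉ S) (hg : ∀ a ∈ S, ∀ b ∈ S, Nat.gcd a b ∈ S)
    (hcard : S.card ≤ 7) (v y1 y2 y3 y4 : ℕ) (hv : v ∈ S)
    (h1 : y1 ∈ S) (h2 : y2 ∈ S) (h3 : y3 ∈ S) (h4 : y4 ∈ S)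
    (hd1 : y1 ∣ v) (hd2 : y2 ∣ v) (hd3 : y3 ∣ v) (hd4 : y4 ∣ v)
    (hne1 : y1 ≠ v) (hne2 : y2 ≠ v) (hne3 : y3 ≠ v) (hne4 : y4 ≠ v)
    (nd12 : ¬ y1 ∣ y2) (nd13 : ¬ y1 ∣ y3) (nd14 : ¬ y1 ∣ y4) (nd21 : ¬ y2 ∣ y1) (nd23 : ¬ y2 ∣ y3) (nd24 : ¬ y2 ∣ y4)
    (nd31 : ¬ y3 ∣ y1) (nd32 : ¬ y3 ∣ y2) (nd34 : ¬ y3 ∣ y4) (nd41 : ¬ y4 ∣ y1) (nd42 : ¬ y4 ∣ y2) (nd43 : ¬ y4 ∣ y3) :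
    1/(v:ℚ) - 1/(y1:ℚ) - 1/(y2:ℚ) - 1/(y3:ℚ) - 1/(y4:ℚ) + 1/((Nat.gcd y1 y2 : ℕ):ℚ) + 1/((Nat.gcd y1 y3 : ℕ):ℚ) + 1/((Nat.gcd y1 y4 : ℕ):ℚ) + 1/((Nat.gcd y2 y3 : ℕ):ℚ) + 1/((Nat.gcd y2 y4 : ℕ):ℚ) + 1/((Nat.gcd y3 y4 : ℕ):ℚ) - 1/((Nat.gcd y1 (Nat.gcd y2 y3) : ℕ):ℚ) - 1/((Nat.gcd y1 (Nat.gcd y2 y4) : ℕ):ℚ) - 1/((Nat.gcd y1 (Nat.gcd y3 y4) : ℕ):ℚ) - 1/((Nat.gcd y2 (Nat.gcd y3 y4) : ℕ):ℚ) + 1/((Nat.gcd y1 (Nat.gcd y2 (Nat.gcd y3 y4)) : ℕ):ℚ) ≠ 0 := by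
  have hvpos : 0 < v := Nat.pos_of_ne_zero (by rintro rfl; exact h0 hv)
  have hp1 : 0 < y1 := Nat.pos_of_ne_zero (by rintro rfl; exact h0 h1)
  have hp2 : 0 < y2 := Nat.pos_of_ne_zero (by rintro rfl; exact h0 h2)
  have hp3 : 0 < y3 := Nat.pos_of_ne_zero (by rintro rfl; exact h0 h3)
  have hp4 : 0 < y4 := Nat.pos_of_ne_zero (by rintro rfl; exact h0 h4)
  have bdy1 : (Nat.gcd y1 (Nat.gcd y2 (Nat.gcd y3 y4))) ∣ y1 := Nat.gcd_dvd_left _ _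
  have bdy2 : (Nat.gcd y1 (Nat.gcd y2 (Nat.gcd y3 y4))) ∣ y2 := (Nat.gcd_dvd_right _ _).trans (Nat.gcd_dvd_left _ _)
  have bdy3 : (Nat.gcd y1 (Nat.gcd y2 (Nat.gcd y3 y4))) ∣ y3 := (Nat.gcd_dvd_right _ _).trans ((Nat.gcd_dvd_right _ _).trans (Nat.gcd_dvd_left _ _))
  have bdy4 : (Nat.gcd y1 (Nat.gcd y2 (Nat.gcd y3 y4))) ∣ y4 := (Nat.gcd_dvd_right _ _).trans ((Nat.gcd_dvd_right _ _).trans (Nat.gcd_dvd_right _ _))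
  have hpB : 0 < (Nat.gcd y1 (Nat.gcd y2 (Nat.gcd y3 y4))) := Nat.pos_of_dvd_of_pos bdy1 hp1
  have mB : (Nat.gcd y1 (Nat.gcd y2 (Nat.gcd y3 y4))) ∈ S := hg _ h1 _ (hg _ h2 _ (hg _ h3 _ h4))
  have nBv : (Nat.gcd y1 (Nat.gcd y2 (Nat.gcd y3 y4))) ≠ v := fun h => hne1 (Nat.dvd_antisymm hd1 (h ▸ bdy1))
  have nB1 : (Nat.gcd y1 (Nat.gcd y2 (Nat.gcd y3 y4))) ≠ y1 := fun h => nd12 (h ▸ bdy2)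
  have nB2 : (Nat.gcd y1 (Nat.gcd y2 (Nat.gcd y3 y4))) ≠ y2 := fun h => nd21 (h ▸ bdy1)
  have nB3 : (Nat.gcd y1 (Nat.gcd y2 (Nat.gcd y3 y4))) ≠ y3 := fun h => nd31 (h ▸ bdy1)
  have nB4 : (Nat.gcd y1 (Nat.gcd y2 (Nat.gcd y3 y4))) ≠ y4 := fun h => nd41 (h ▸ bdy1)
  have dG12_1 : (Nat.gcd y1 y2) ∣ y1 := Nat.gcd_dvd_left _ _
  have dG12_2 : (Nat.gcd y1 y2) ∣ y2 := Nat.gcd_dvd_right _ _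
  have mG12 : (Nat.gcd y1 y2) ∈ S := hg _ h1 _ h2
  have nG12v : (Nat.gcd y1 y2) ≠ v := fun h => hne1 (Nat.dvd_antisymm hd1 (h ▸ dG12_1))
  have nG121 : (Nat.gcd y1 y2) ≠ y1 := fun h => nd12 (h ▸ dG12_2)
  have nG122 : (Nat.gcd y1 y2) ≠ y2 := fun h => nd21 (h ▸ dG12_1)
  have nG123 : (Nat.gcd y1 y2) ≠ y3 := fun h => nd31 (h ▸ dG12_1)
  have nG124 : (Nat.gcd y1 y2) ≠ y4 := fun h => nd41 (h ▸ dG12_1)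
  have bdG12 : (Nat.gcd y1 (Nat.gcd y2 (Nat.gcd y3 y4))) ∣ (Nat.gcd y1 y2) := Nat.dvd_gcd bdy1 bdy2
  have dG13_1 : (Nat.gcd y1 y3) ∣ y1 := Nat.gcd_dvd_left _ _
  have dG13_3 : (Nat.gcd y1 y3) ∣ y3 := Nat.gcd_dvd_right _ _
  have mG13 : (Nat.gcd y1 y3) ∈ S := hg _ h1 _ h3
  have nG13v : (Nat.gcd y1 y3) ≠ v := fun h => hne1 (Nat.dvd_antisymm hd1 (h ▸ dG13_1))
  have nG131 : (Nat.gcd y1 y3) ≠ y1 := fun h => nd13 (h ▸ dG13_3)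
  have nG132 : (Nat.gcd y1 y3) ≠ y2 := fun h => nd21 (h ▸ dG13_1)
  have nG133 : (Nat.gcd y1 y3) ≠ y3 := fun h => nd31 (h ▸ dG13_1)
  have nG134 : (Nat.gcd y1 y3) ≠ y4 := fun h => nd41 (h ▸ dG13_1)
  have bdG13 : (Nat.gcd y1 (Nat.gcd y2 (Nat.gcd y3 y4))) ∣ (Nat.gcd y1 y3) := Nat.dvd_gcd bdy1 bdy3
  have dG14_1 : (Nat.gcd y1 y4) ∣ y1 := Nat.gcd_dvd_left _ _
  have dG14_4 : (Nat.gcd y1 y4) ∣ y4 := Nat.gcd_dvd_right _ _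
  have mG14 : (Nat.gcd y1 y4) ∈ S := hg _ h1 _ h4
  have nG14v : (Nat.gcd y1 y4) ≠ v := fun h => hne1 (Nat.dvd_antisymm hd1 (h ▸ dG14_1))
  have nG141 : (Nat.gcd y1 y4) ≠ y1 := fun h => nd14 (h ▸ dG14_4)
  have nG142 : (Nat.gcd y1 y4) ≠ y2 := fun h => nd21 (h ▸ dG14_1)
  have nG143 : (Nat.gcd y1 y4) ≠ y3 := fun h => nd31 (h ▸ dG14_1)
  have nG144 : (Nat.gcd y1 y4) ≠ y4 := fun h => nd41 (h ▸ dG14_1)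
  have bdG14 : (Nat.gcd y1 (Nat.gcd y2 (Nat.gcd y3 y4))) ∣ (Nat.gcd y1 y4) := Nat.dvd_gcd bdy1 bdy4
  have dG23_2 : (Nat.gcd y2 y3) ∣ y2 := Nat.gcd_dvd_left _ _
  have dG23_3 : (Nat.gcd y2 y3) ∣ y3 := Nat.gcd_dvd_right _ _
  have mG23 : (Nat.gcd y2 y3) ∈ S := hg _ h2 _ h3
  have nG23v : (Nat.gcd y2 y3) ≠ v := fun h => hne2 (Nat.dvd_antisymm hd2 (h ▸ dG23_2))
  have nG231 : (Nat.gcd y2 y3) ≠ y1 := fun h => nd12 (h ▸ dG23_2)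
  have nG232 : (Nat.gcd y2 y3) ≠ y2 := fun h => nd23 (h ▸ dG23_3)
  have nG233 : (Nat.gcd y2 y3) ≠ y3 := fun h => nd32 (h ▸ dG23_2)
  have nG234 : (Nat.gcd y2 y3) ≠ y4 := fun h => nd42 (h ▸ dG23_2)
  have bdG23 : (Nat.gcd y1 (Nat.gcd y2 (Nat.gcd y3 y4))) ∣ (Nat.gcd y2 y3) := Nat.dvd_gcd bdy2 bdy3
  have dG24_2 : (Nat.gcd y2 y4) ∣ y2 := Nat.gcd_dvd_left _ _
  have dG24_4 : (Nat.gcd y2 y4) ∣ y4 := Nat.gcd_dvd_right _ _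
  have mG24 : (Nat.gcd y2 y4) ∈ S := hg _ h2 _ h4
  have nG24v : (Nat.gcd y2 y4) ≠ v := fun h => hne2 (Nat.dvd_antisymm hd2 (h ▸ dG24_2))
  have nG241 : (Nat.gcd y2 y4) ≠ y1 := fun h => nd12 (h ▸ dG24_2)
  have nG242 : (Nat.gcd y2 y4) ≠ y2 := fun h => nd24 (h ▸ dG24_4)
  have nG243 : (Nat.gcd y2 y4) ≠ y3 := fun h => nd32 (h ▸ dG24_2)
  have nG244 : (Nat.gcd y2 y4) ≠ y4 := fun h => nd42 (h ▸ dG24_2)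
  have bdG24 : (Nat.gcd y1 (Nat.gcd y2 (Nat.gcd y3 y4))) ∣ (Nat.gcd y2 y4) := Nat.dvd_gcd bdy2 bdy4
  have dG34_3 : (Nat.gcd y3 y4) ∣ y3 := Nat.gcd_dvd_left _ _
  have dG34_4 : (Nat.gcd y3 y4) ∣ y4 := Nat.gcd_dvd_right _ _
  have mG34 : (Nat.gcd y3 y4) ∈ S := hg _ h3 _ h4
  have nG34v : (Nat.gcd y3 y4) ≠ v := fun h => hne3 (Nat.dvd_antisymm hd3 (h ▸ dG34_3))
  have nG341 : (Nat.gcd y3 y4) ≠ y1 := fun h => nd13 (h ▸ dG34_3)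
  have nG342 : (Nat.gcd y3 y4) ≠ y2 := fun h => nd23 (h ▸ dG34_3)
  have nG343 : (Nat.gcd y3 y4) ≠ y3 := fun h => nd34 (h ▸ dG34_4)
  have nG344 : (Nat.gcd y3 y4) ≠ y4 := fun h => nd43 (h ▸ dG34_3)
  have bdG34 : (Nat.gcd y1 (Nat.gcd y2 (Nat.gcd y3 y4))) ∣ (Nat.gcd y3 y4) := Nat.dvd_gcd bdy3 bdy4
  have dT123_1 : (Nat.gcd y1 (Nat.gcd y2 y3)) ∣ y1 := Nat.gcd_dvd_left _ _
  have dT123_2 : (Nat.gcd y1 (Nat.gcd y2 y3)) ∣ y2 := (Nat.gcd_dvd_right _ _).trans (Nat.gcd_dvd_left _ _)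
  have dT123_3 : (Nat.gcd y1 (Nat.gcd y2 y3)) ∣ y3 := (Nat.gcd_dvd_right _ _).trans (Nat.gcd_dvd_right _ _)
  have mT123 : (Nat.gcd y1 (Nat.gcd y2 y3)) ∈ S := hg _ h1 _ (hg _ h2 _ h3)
  have nT123v : (Nat.gcd y1 (Nat.gcd y2 y3)) ≠ v := fun h => hne1 (Nat.dvd_antisymm hd1 (h ▸ dT123_1))
  have nT1231 : (Nat.gcd y1 (Nat.gcd y2 y3)) ≠ y1 := fun h => nd12 (h ▸ dT123_2)
  have nT1232 : (Nat.gcd y1 (Nat.gcd y2 y3)) ≠ y2 := fun h => nd21 (h ▸ dT123_1)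
  have nT1233 : (Nat.gcd y1 (Nat.gcd y2 y3)) ≠ y3 := fun h => nd31 (h ▸ dT123_1)
  have nT1234 : (Nat.gcd y1 (Nat.gcd y2 y3)) ≠ y4 := fun h => nd41 (h ▸ dT123_1)
  have bdT123 : (Nat.gcd y1 (Nat.gcd y2 (Nat.gcd y3 y4))) ∣ (Nat.gcd y1 (Nat.gcd y2 y3)) := Nat.dvd_gcd bdy1 (Nat.dvd_gcd bdy2 bdy3)
  have dT124_1 : (Nat.gcd y1 (Nat.gcd y2 y4)) ∣ y1 := Nat.gcd_dvd_left _ _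
  have dT124_2 : (Nat.gcd y1 (Nat.gcd y2 y4)) ∣ y2 := (Nat.gcd_dvd_right _ _).trans (Nat.gcd_dvd_left _ _)
  have dT124_4 : (Nat.gcd y1 (Nat.gcd y2 y4)) ∣ y4 := (Nat.gcd_dvd_right _ _).trans (Nat.gcd_dvd_right _ _)
  have mT124 : (Nat.gcd y1 (Nat.gcd y2 y4)) ∈ S := hg _ h1 _ (hg _ h2 _ h4)
  have nT124v : (Nat.gcd y1 (Nat.gcd y2 y4)) ≠ v := fun h => hne1 (Nat.dvd_antisymm hd1 (h ▸ dT124_1))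
  have nT1241 : (Nat.gcd y1 (Nat.gcd y2 y4)) ≠ y1 := fun h => nd12 (h ▸ dT124_2)
  have nT1242 : (Nat.gcd y1 (Nat.gcd y2 y4)) ≠ y2 := fun h => nd21 (h ▸ dT124_1)
  have nT1243 : (Nat.gcd y1 (Nat.gcd y2 y4)) ≠ y3 := fun h => nd31 (h ▸ dT124_1)
  have nT1244 : (Nat.gcd y1 (Nat.gcd y2 y4)) ≠ y4 := fun h => nd41 (h ▸ dT124_1)
  have bdT124 : (Nat.gcd y1 (Nat.gcd y2 (Nat.gcd y3 y4))) ∣ (Nat.gcd y1 (Nat.gcd y2 y4)) := Nat.dvd_gcd bdy1 (Nat.dvd_gcd bdy2 bdy4)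
  have dT134_1 : (Nat.gcd y1 (Nat.gcd y3 y4)) ∣ y1 := Nat.gcd_dvd_left _ _
  have dT134_3 : (Nat.gcd y1 (Nat.gcd y3 y4)) ∣ y3 := (Nat.gcd_dvd_right _ _).trans (Nat.gcd_dvd_left _ _)
  have dT134_4 : (Nat.gcd y1 (Nat.gcd y3 y4)) ∣ y4 := (Nat.gcd_dvd_right _ _).trans (Nat.gcd_dvd_right _ _)
  have mT134 : (Nat.gcd y1 (Nat.gcd y3 y4)) ∈ S := hg _ h1 _ (hg _ h3 _ h4)
  have nT134v : (Nat.gcd y1 (Nat.gcd y3 y4)) ≠ v := fun h => hne1 (Nat.dvd_antisymm hd1 (h ▸ dT134_1))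
  have nT1341 : (Nat.gcd y1 (Nat.gcd y3 y4)) ≠ y1 := fun h => nd13 (h ▸ dT134_3)
  have nT1342 : (Nat.gcd y1 (Nat.gcd y3 y4)) ≠ y2 := fun h => nd21 (h ▸ dT134_1)
  have nT1343 : (Nat.gcd y1 (Nat.gcd y3 y4)) ≠ y3 := fun h => nd31 (h ▸ dT134_1)
  have nT1344 : (Nat.gcd y1 (Nat.gcd y3 y4)) ≠ y4 := fun h => nd41 (h ▸ dT134_1)
  have bdT134 : (Nat.gcd y1 (Nat.gcd y2 (Nat.gcd y3 y4))) ∣ (Nat.gcd y1 (Nat.gcd y3 y4)) := Nat.dvd_gcd bdy1 (Nat.dvd_gcd bdy3 bdy4)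
  have dT234_2 : (Nat.gcd y2 (Nat.gcd y3 y4)) ∣ y2 := Nat.gcd_dvd_left _ _
  have dT234_3 : (Nat.gcd y2 (Nat.gcd y3 y4)) ∣ y3 := (Nat.gcd_dvd_right _ _).trans (Nat.gcd_dvd_left _ _)
  have dT234_4 : (Nat.gcd y2 (Nat.gcd y3 y4)) ∣ y4 := (Nat.gcd_dvd_right _ _).trans (Nat.gcd_dvd_right _ _)
  have mT234 : (Nat.gcd y2 (Nat.gcd y3 y4)) ∈ S := hg _ h2 _ (hg _ h3 _ h4)
  have nT234v : (Nat.gcd y2 (Nat.gcd y3 y4)) ≠ v := fun h => hne2 (Nat.dvd_antisymm hd2 (h ▸ dT234_2))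
  have nT2341 : (Nat.gcd y2 (Nat.gcd y3 y4)) ≠ y1 := fun h => nd12 (h ▸ dT234_2)
  have nT2342 : (Nat.gcd y2 (Nat.gcd y3 y4)) ≠ y2 := fun h => nd23 (h ▸ dT234_3)
  have nT2343 : (Nat.gcd y2 (Nat.gcd y3 y4)) ≠ y3 := fun h => nd32 (h ▸ dT234_2)
  have nT2344 : (Nat.gcd y2 (Nat.gcd y3 y4)) ≠ y4 := fun h => nd42 (h ▸ dT234_2)
  have bdT234 : (Nat.gcd y1 (Nat.gcd y2 (Nat.gcd y3 y4))) ∣ (Nat.gcd y2 (Nat.gcd y3 y4)) := Nat.dvd_gcd bdy2 (Nat.dvd_gcd bdy3 bdy4)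
  have two : ∀ a q : ℕ, a ∈ S → a ≠ v → a ≠ y1 → a ≠ y2 → a ≠ y3 → a ≠ y4 → a ≠ (Nat.gcd y1 (Nat.gcd y2 (Nat.gcd y3 y4))) →
      q ∈ S → q ≠ v → q ≠ y1 → q ≠ y2 → q ≠ y3 → q ≠ y4 → q = a ∨ q = (Nat.gcd y1 (Nat.gcd y2 (Nat.gcd y3 y4))) := by
    intro a q ma nav na1 na2 na3 na4 naB mq nqv nq1 nq2 nq3 nq4
    by_contra hcon
    push_neg at hcon
    exact card8 hcard hv h1 h2 h3 h4 ma mq mB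
      (fun h => hne1 h.symm) (fun h => hne2 h.symm) (fun h => hne3 h.symm) (fun h => hne4 h.symm)
      (fun h => nav h.symm) (fun h => nqv h.symm) nBv.symm
      (fun h => nd12 (h ▸ dvd_rfl)) (fun h => nd13 (h ▸ dvd_rfl)) (fun h => nd14 (h ▸ dvd_rfl))
      (fun h => na1 h.symm) (fun h => nq1 h.symm) nB1.symm
      (fun h => nd23 (h ▸ dvd_rfl)) (fun h => nd24 (h ▸ dvd_rfl))
      (fun h => na2 h.symm) (fun h => nq2 h.symm) nB2.symm
      (fun h => nd34 (h ▸ dvd_rfl))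
      (fun h => na3 h.symm) (fun h => nq3 h.symm) nB3.symm
      (fun h => na4 h.symm) (fun h => nq4 h.symm) nB4.symm
      (fun h => hcon.1 h.symm) naB hcon.2
  have qcast : ∀ q r : ℕ, q = r → (1:ℚ)/(q:ℚ) = 1/(r:ℚ) := by rintro q r rfl; rfl
  rcases Classical.em ((Nat.gcd y1 y2) = (Nat.gcd y1 (Nat.gcd y2 (Nat.gcd y3 y4))) ∧ (Nat.gcd y1 y3) = (Nat.gcd y1 (Nat.gcd y2 (Nat.gcd y3 y4))) ∧ (Nat.gcd y1 y4) = (Nat.gcd y1 (Nat.gcd y2 (Nat.gcd y3 y4))) ∧ (Nat.gcd y2 y3) = (Nat.gcd y1 (Nat.gcd y2 (Nat.gcd y3 y4))) ∧ (Nat.gcd y2 y4) = (Nat.gcd y1 (Nat.gcd y2 (Nat.gcd y3 y4))) ∧ (Nat.gcd y3 y4) = (Nat.gcd y1 (Nat.gcd y2 (Nat.gcd y3 y4))) ∧ (Nat.gcd y1 (Nat.gcd y2 y3)) = (Nat.gcd y1 (Nat.gcd y2 (Nat.gcd y3 y4))) ∧ (Nat.gcd y1 (Nat.gcd y2 y4))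 = (Nat.gcd y1 (Nat.gcd y2 (Nat.gcd y3 y4))) ∧ (Nat.gcd y1 (Nat.gcd y3 y4)) = (Nat.gcd y1 (Nat.gcd y2 (Nat.gcd y3 y4))) ∧ (Nat.gcd y2 (Nat.gcd y3 y4)) = (Nat.gcd y1 (Nat.gcd y2 (Nat.gcd y3 y4)))) with hall | hall
  · obtain ⟨eG12, eG13, eG14, eG23, eG24, eG34, eT123, eT124, eT134, eT234⟩ := hall
    have qG12 := qcast _ _ eG12
    have qG13 := qcast _ _ eG13
    have qG14 := qcast _ _ eG14
    have qG23 := qcast _ _ eG23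
    have qG24 := qcast _ _ eG24
    have qG34 := qcast _ _ eG34
    have qT123 := qcast _ _ eT123
    have qT124 := qcast _ _ eT124
    have qT134 := qcast _ _ eT134
    have qT234 := qcast _ _ eT234
    have rB1 := recip_le hpB bdy1 nB1
    have rB2 := recip_le hpB bdy2 nB2
    have rB3 := recip_le hpB bdy3 nB3
    have rB4 := recip_le hpB bdy4 nB4
    have pv := recip_pos hvpos
    have p1 := recip_pos hp1
    have p2 := recip_pos hp2
    have p3 := recip_pos hp3
    have p4 := recip_pos hp4
    refine ne_of_gt ?_
    linarith
  · have hw : (Nat.gcd y1 y2) ≠ (Nat.gcd y1 (Nat.gcd y2 (Nat.gcd y3 y4))) ∨ (Nat.gcd y1 y3) ≠ (Nat.gcd y1 (Nat.gcd y2 (Nat.gcd y3 y4))) ∨ (Nat.gcd y1 y4) ≠ (Nat.gcd y1 (Nat.gcd y2 (Nat.gcd y3 y4))) ∨ (Nat.gcd y2 y3) ≠ (Nat.gcd y1 (Nat.gcd y2 (Nat.gcd y3 y4))) ∨ (Nat.gcd y2 y4) ≠ (Nat.gcd y1 (Nat.gcd y2 (Nat.gcd y3 y4))) ∨ (Nat.gcd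 y3 y4) ≠ (Nat.gcd y1 (Nat.gcd y2 (Nat.gcd y3 y4))) ∨ (Nat.gcd y1 (Nat.gcd y2 y3)) ≠ (Nat.gcd y1 (Nat.gcd y2 (Nat.gcd y3 y4))) ∨ (Nat.gcd y1 (Nat.gcd y2 y4)) ≠ (Nat.gcd y1 (Nat.gcd y2 (Nat.gcd y3 y4))) ∨ (Nat.gcd y1 (Nat.gcd y3 y4)) ≠ (Nat.gcd y1 (Nat.gcd y2 (Nat.gcd y3 y4))) ∨ (Nat.gcd y2 (Nat.gcd y3 y4)) ≠ (Nat.gcd y1 (Nat.gcd y2 (Nat.gcd y3 y4))) := by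
      simp only [not_and_or] at hall
      tauto
    rcases hw with hwit|hwit|hwit|hwit|hwit|hwit|hwit|hwit|hwit|hwit
    · have hkey := m4pair v y1 y2 y3 y4 (Nat.gcd y1 y2) (Nat.gcd y1 (Nat.gcd y2 (Nat.gcd y3 y4))) (Nat.gcd y1 y3) (Nat.gcd y1 y4) (Nat.gcd y2 y3) (Nat.gcd y2 y4) (Nat.gcd y3 y4) (Nat.gcd y1 (Nat.gcd y2 y3)) (Nat.gcd y1 (Nat.gcd y2 y4)) (Nat.gcd y1 (Nat.gcd y3 y4)) (Nat.gcd y2 (Nat.gcd y3 y4))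
        hvpos
        hp1
        hp2
        hp3
        hp4
        dG12_1
        dG12_2
        nG121
        nG122
        nG123
        nG124
        bdy1
        bdy2
        bdy3
        bdy4
        nB1
        nB2
        nB3
        nB4
        (fun w w1 w2 w3 w4 => Nat.dvd_gcd w1 (Nat.dvd_gcd w2 (Nat.dvd_gcd w3 w4)))
        hwit
        bdG12
        dG13_1
        dG13_3
        (fun w w1 w3 => Nat.dvd_gcd w1 w3)
        (two (Nat.gcd y1 y2) (Nat.gcd y1 y3) mG12 nG12v nG121 nG122 nG123 nG124 hwit mG13 nG13v nG131 nG132 nG133 nG134)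
        dG14_1
        dG14_4
        (fun w w1 w4 => Nat.dvd_gcd w1 w4)
        (two (Nat.gcd y1 y2) (Nat.gcd y1 y4) mG12 nG12v nG121 nG122 nG123 nG124 hwit mG14 nG14v nG141 nG142 nG143 nG144)
        dG23_2
        dG23_3
        (fun w w2 w3 => Nat.dvd_gcd w2 w3)
        (two (Nat.gcd y1 y2) (Nat.gcd y2 y3) mG12 nG12v nG121 nG122 nG123 nG124 hwit mG23 nG23v nG231 nG232 nG233 nG234)
        dG24_2
        dG24_4
        (fun w w2 w4 => Nat.dvd_gcd w2 w4)
        (two (Nat.gcd y1 y2) (Nat.gcd y2 y4) mG12 nG12v nG121 nG122 nG123 nG124 hwit mG24 nG24v nG241 nG242 nG243 nG244)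
        dG34_3
        dG34_4
        (fun w w3 w4 => Nat.dvd_gcd w3 w4)
        (two (Nat.gcd y1 y2) (Nat.gcd y3 y4) mG12 nG12v nG121 nG122 nG123 nG124 hwit mG34 nG34v nG341 nG342 nG343 nG344)
        dT123_3
        (fun w w1 w2 w3 => Nat.dvd_gcd w1 (Nat.dvd_gcd w2 w3))
        (two (Nat.gcd y1 y2) (Nat.gcd y1 (Nat.gcd y2 y3)) mG12 nG12v nG121 nG122 nG123 nG124 hwit mT123 nT123v nT1231 nT1232 nT1233 nT1234)
        dT124_4
        (fun w w1 w2 w4 => Nat.dvd_gcd w1 (Nat.dvd_gcd w2 w4))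
        (two (Nat.gcd y1 y2) (Nat.gcd y1 (Nat.gcd y2 y4)) mG12 nG12v nG121 nG122 nG123 nG124 hwit mT124 nT124v nT1241 nT1242 nT1243 nT1244)
        dT134_4
        dT134_3
        (fun w w1 w3 w4 => Nat.dvd_gcd w1 (Nat.dvd_gcd w3 w4))
        (two (Nat.gcd y1 y2) (Nat.gcd y1 (Nat.gcd y3 y4)) mG12 nG12v nG121 nG122 nG123 nG124 hwit mT134 nT134v nT1341 nT1342 nT1343 nT1344)
        dT234_4
        dT234_3
        (fun w w2 w3 w4 => Nat.dvd_gcd w2 (Nat.dvd_gcd w3 w4))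
        (two (Nat.gcd y1 y2) (Nat.gcd y2 (Nat.gcd y3 y4)) mG12 nG12v nG121 nG122 nG123 nG124 hwit mT234 nT234v nT2341 nT2342 nT2343 nT2344)
      intro hcon
      apply hkey
      rw [← hcon]
      try ring
    · have hkey := m4pair v y1 y3 y2 y4 (Nat.gcd y1 y3) (Nat.gcd y1 (Nat.gcd y2 (Nat.gcd y3 y4))) (Nat.gcd y1 y2) (Nat.gcd y1 y4) (Nat.gcd y2 y3) (Nat.gcd y3 y4) (Nat.gcd y2 y4) (Nat.gcd y1 (Nat.gcd y2 y3)) (Nat.gcd y1 (Nat.gcd y3 y4)) (Nat.gcd y1 (Nat.gcd y2 y4)) (Nat.gcd y2 (Nat.gcd y3 y4))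
        hvpos
        hp1
        hp3
        hp2
        hp4
        dG13_1
        dG13_3
        nG131
        nG133
        nG132
        nG134
        bdy1
        bdy3
        bdy2
        bdy4
        nB1
        nB3
        nB2
        nB4
        (fun w w1 w3 w2 w4 => Nat.dvd_gcd w1 (Nat.dvd_gcd w2 (Nat.dvd_gcd w3 w4)))
        hwit
        bdG13
        dG12_1
        dG12_2
        (fun w w1 w2 => Nat.dvd_gcd w1 w2)
        (two (Nat.gcd y1 y3) (Nat.gcd y1 y2) mG13 nG13v nG131 nG132 nG133 nG134 hwit mG12 nG12v nG121 nG122 nG123 nG124)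
        dG14_1
        dG14_4
        (fun w w1 w4 => Nat.dvd_gcd w1 w4)
        (two (Nat.gcd y1 y3) (Nat.gcd y1 y4) mG13 nG13v nG131 nG132 nG133 nG134 hwit mG14 nG14v nG141 nG142 nG143 nG144)
        dG23_3
        dG23_2
        (fun w w3 w2 => Nat.dvd_gcd w2 w3)
        (two (Nat.gcd y1 y3) (Nat.gcd y2 y3) mG13 nG13v nG131 nG132 nG133 nG134 hwit mG23 nG23v nG231 nG232 nG233 nG234)
        dG34_3
        dG34_4
        (fun w w3 w4 => Nat.dvd_gcd w3 w4)
        (two (Nat.gcd y1 y3) (Nat.gcd y3 y4) mG13 nG13v nG131 nG132 nG133 nG134 hwit mG34 nG34v nG341 nG342 nG343 nG344)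
        dG24_2
        dG24_4
        (fun w w2 w4 => Nat.dvd_gcd w2 w4)
        (two (Nat.gcd y1 y3) (Nat.gcd y2 y4) mG13 nG13v nG131 nG132 nG133 nG134 hwit mG24 nG24v nG241 nG242 nG243 nG244)
        dT123_2
        (fun w w1 w3 w2 => Nat.dvd_gcd w1 (Nat.dvd_gcd w2 w3))
        (two (Nat.gcd y1 y3) (Nat.gcd y1 (Nat.gcd y2 y3)) mG13 nG13v nG131 nG132 nG133 nG134 hwit mT123 nT123v nT1231 nT1232 nT1233 nT1234)
        dT134_4
        (fun w w1 w3 w4 => Nat.dvd_gcd w1 (Nat.dvd_gcd w3 w4))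
        (two (Nat.gcd y1 y3) (Nat.gcd y1 (Nat.gcd y3 y4)) mG13 nG13v nG131 nG132 nG133 nG134 hwit mT134 nT134v nT1341 nT1342 nT1343 nT1344)
        dT124_4
        dT124_2
        (fun w w1 w2 w4 => Nat.dvd_gcd w1 (Nat.dvd_gcd w2 w4))
        (two (Nat.gcd y1 y3) (Nat.gcd y1 (Nat.gcd y2 y4)) mG13 nG13v nG131 nG132 nG133 nG134 hwit mT124 nT124v nT1241 nT1242 nT1243 nT1244)
        dT234_4
        dT234_2
        (fun w w3 w2 w4 => Nat.dvd_gcd w2 (Nat.dvd_gcd w3 w4))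
        (two (Nat.gcd y1 y3) (Nat.gcd y2 (Nat.gcd y3 y4)) mG13 nG13v nG131 nG132 nG133 nG134 hwit mT234 nT234v nT2341 nT2342 nT2343 nT2344)
      intro hcon
      apply hkey
      rw [← hcon]
      try ring
    · have hkey := m4pair v y1 y4 y2 y3 (Nat.gcd y1 y4) (Nat.gcd y1 (Nat.gcd y2 (Nat.gcd y3 y4))) (Nat.gcd y1 y2) (Nat.gcd y1 y3) (Nat.gcd y2 y4) (Nat.gcd y3 y4) (Nat.gcd y2 y3) (Nat.gcd y1 (Nat.gcd y2 y4)) (Nat.gcd y1 (Nat.gcd y3 y4)) (Nat.gcd y1 (Nat.gcd y2 y3)) (Nat.gcd y2 (Nat.gcd y3 y4))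
        hvpos
        hp1
        hp4
        hp2
        hp3
        dG14_1
        dG14_4
        nG141
        nG144
        nG142
        nG143
        bdy1
        bdy4
        bdy2
        bdy3
        nB1
        nB4
        nB2
        nB3
        (fun w w1 w4 w2 w3 => Nat.dvd_gcd w1 (Nat.dvd_gcd w2 (Nat.dvd_gcd w3 w4)))
        hwit
        bdG14
        dG12_1
        dG12_2
        (fun w w1 w2 => Nat.dvd_gcd w1 w2)
        (two (Nat.gcd y1 y4) (Nat.gcd y1 y2) mG14 nG14v nG141 nG142 nG143 nG144 hwit mG12 nG12v nG121 nG122 nG123 nG124)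
        dG13_1
        dG13_3
        (fun w w1 w3 => Nat.dvd_gcd w1 w3)
        (two (Nat.gcd y1 y4) (Nat.gcd y1 y3) mG14 nG14v nG141 nG142 nG143 nG144 hwit mG13 nG13v nG131 nG132 nG133 nG134)
        dG24_4
        dG24_2
        (fun w w4 w2 => Nat.dvd_gcd w2 w4)
        (two (Nat.gcd y1 y4) (Nat.gcd y2 y4) mG14 nG14v nG141 nG142 nG143 nG144 hwit mG24 nG24v nG241 nG242 nG243 nG244)
        dG34_4
        dG34_3
        (fun w w4 w3 => Nat.dvd_gcd w3 w4)
        (two (Nat.gcd y1 y4) (Nat.gcd y3 y4) mG14 nG14v nG141 nG142 nG143 nG144 hwit mG34 nG34v nG341 nG342 nG343 nG344)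
        dG23_2
        dG23_3
        (fun w w2 w3 => Nat.dvd_gcd w2 w3)
        (two (Nat.gcd y1 y4) (Nat.gcd y2 y3) mG14 nG14v nG141 nG142 nG143 nG144 hwit mG23 nG23v nG231 nG232 nG233 nG234)
        dT124_2
        (fun w w1 w4 w2 => Nat.dvd_gcd w1 (Nat.dvd_gcd w2 w4))
        (two (Nat.gcd y1 y4) (Nat.gcd y1 (Nat.gcd y2 y4)) mG14 nG14v nG141 nG142 nG143 nG144 hwit mT124 nT124v nT1241 nT1242 nT1243 nT1244)
        dT134_3
        (fun w w1 w4 w3 => Nat.dvd_gcd w1 (Nat.dvd_gcd w3 w4))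
        (two (Nat.gcd y1 y4) (Nat.gcd y1 (Nat.gcd y3 y4)) mG14 nG14v nG141 nG142 nG143 nG144 hwit mT134 nT134v nT1341 nT1342 nT1343 nT1344)
        dT123_3
        dT123_2
        (fun w w1 w2 w3 => Nat.dvd_gcd w1 (Nat.dvd_gcd w2 w3))
        (two (Nat.gcd y1 y4) (Nat.gcd y1 (Nat.gcd y2 y3)) mG14 nG14v nG141 nG142 nG143 nG144 hwit mT123 nT123v nT1231 nT1232 nT1233 nT1234)
        dT234_3
        dT234_2
        (fun w w4 w2 w3 => Nat.dvd_gcd w2 (Nat.dvd_gcd w3 w4))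
        (two (Nat.gcd y1 y4) (Nat.gcd y2 (Nat.gcd y3 y4)) mG14 nG14v nG141 nG142 nG143 nG144 hwit mT234 nT234v nT2341 nT2342 nT2343 nT2344)
      intro hcon
      apply hkey
      rw [← hcon]
      try ring
    · have hkey := m4pair v y2 y3 y1 y4 (Nat.gcd y2 y3) (Nat.gcd y1 (Nat.gcd y2 (Nat.gcd y3 y4))) (Nat.gcd y1 y2) (Nat.gcd y2 y4) (Nat.gcd y1 y3) (Nat.gcd y3 y4) (Nat.gcd y1 y4) (Nat.gcd y1 (Nat.gcd y2 y3)) (Nat.gcd y2 (Nat.gcd y3 y4)) (Nat.gcd y1 (Nat.gcd y2 y4)) (Nat.gcd y1 (Nat.gcd y3 y4))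
        hvpos
        hp2
        hp3
        hp1
        hp4
        dG23_2
        dG23_3
        nG232
        nG233
        nG231
        nG234
        bdy2
        bdy3
        bdy1
        bdy4
        nB2
        nB3
        nB1
        nB4
        (fun w w2 w3 w1 w4 => Nat.dvd_gcd w1 (Nat.dvd_gcd w2 (Nat.dvd_gcd w3 w4)))
        hwit
        bdG23
        dG12_2
        dG12_1
        (fun w w2 w1 => Nat.dvd_gcd w1 w2)
        (two (Nat.gcd y2 y3) (Nat.gcd y1 y2) mG23 nG23v nG231 nG232 nG233 nG234 hwit mG12 nG12v nG121 nG122 nG123 nG124)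
        dG24_2
        dG24_4
        (fun w w2 w4 => Nat.dvd_gcd w2 w4)
        (two (Nat.gcd y2 y3) (Nat.gcd y2 y4) mG23 nG23v nG231 nG232 nG233 nG234 hwit mG24 nG24v nG241 nG242 nG243 nG244)
        dG13_3
        dG13_1
        (fun w w3 w1 => Nat.dvd_gcd w1 w3)
        (two (Nat.gcd y2 y3) (Nat.gcd y1 y3) mG23 nG23v nG231 nG232 nG233 nG234 hwit mG13 nG13v nG131 nG132 nG133 nG134)
        dG34_3
        dG34_4
        (fun w w3 w4 => Nat.dvd_gcd w3 w4)
        (two (Nat.gcd y2 y3) (Nat.gcd y3 y4) mG23 nG23v nG231 nG232 nG233 nG234 hwit mG34 nG34v nG341 nG342 nG343 nG344)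
        dG14_1
        dG14_4
        (fun w w1 w4 => Nat.dvd_gcd w1 w4)
        (two (Nat.gcd y2 y3) (Nat.gcd y1 y4) mG23 nG23v nG231 nG232 nG233 nG234 hwit mG14 nG14v nG141 nG142 nG143 nG144)
        dT123_1
        (fun w w2 w3 w1 => Nat.dvd_gcd w1 (Nat.dvd_gcd w2 w3))
        (two (Nat.gcd y2 y3) (Nat.gcd y1 (Nat.gcd y2 y3)) mG23 nG23v nG231 nG232 nG233 nG234 hwit mT123 nT123v nT1231 nT1232 nT1233 nT1234)
        dT234_4
        (fun w w2 w3 w4 => Nat.dvd_gcd w2 (Nat.dvd_gcd w3 w4))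
        (two (Nat.gcd y2 y3) (Nat.gcd y2 (Nat.gcd y3 y4)) mG23 nG23v nG231 nG232 nG233 nG234 hwit mT234 nT234v nT2341 nT2342 nT2343 nT2344)
        dT124_4
        dT124_1
        (fun w w2 w1 w4 => Nat.dvd_gcd w1 (Nat.dvd_gcd w2 w4))
        (two (Nat.gcd y2 y3) (Nat.gcd y1 (Nat.gcd y2 y4)) mG23 nG23v nG231 nG232 nG233 nG234 hwit mT124 nT124v nT1241 nT1242 nT1243 nT1244)
        dT134_4
        dT134_1
        (fun w w3 w1 w4 => Nat.dvd_gcd w1 (Nat.dvd_gcd w3 w4))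
        (two (Nat.gcd y2 y3) (Nat.gcd y1 (Nat.gcd y3 y4)) mG23 nG23v nG231 nG232 nG233 nG234 hwit mT134 nT134v nT1341 nT1342 nT1343 nT1344)
      intro hcon
      apply hkey
      rw [← hcon]
      try ring
    · have hkey := m4pair v y2 y4 y1 y3 (Nat.gcd y2 y4) (Nat.gcd y1 (Nat.gcd y2 (Nat.gcd y3 y4))) (Nat.gcd y1 y2) (Nat.gcd y2 y3) (Nat.gcd y1 y4) (Nat.gcd y3 y4) (Nat.gcd y1 y3) (Nat.gcd y1 (Nat.gcd y2 y4)) (Nat.gcd y2 (Nat.gcd y3 y4)) (Nat.gcd y1 (Nat.gcd y2 y3)) (Nat.gcd y1 (Nat.gcd y3 y4))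
        hvpos
        hp2
        hp4
        hp1
        hp3
        dG24_2
        dG24_4
        nG242
        nG244
        nG241
        nG243
        bdy2
        bdy4
        bdy1
        bdy3
        nB2
        nB4
        nB1
        nB3
        (fun w w2 w4 w1 w3 => Nat.dvd_gcd w1 (Nat.dvd_gcd w2 (Nat.dvd_gcd w3 w4)))
        hwit
        bdG24
        dG12_2
        dG12_1
        (fun w w2 w1 => Nat.dvd_gcd w1 w2)
        (two (Nat.gcd y2 y4) (Nat.gcd y1 y2) mG24 nG24v nG241 nG242 nG243 nG244 hwit mG12 nG12v nG121 nG122 nG123 nG124)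
        dG23_2
        dG23_3
        (fun w w2 w3 => Nat.dvd_gcd w2 w3)
        (two (Nat.gcd y2 y4) (Nat.gcd y2 y3) mG24 nG24v nG241 nG242 nG243 nG244 hwit mG23 nG23v nG231 nG232 nG233 nG234)
        dG14_4
        dG14_1
        (fun w w4 w1 => Nat.dvd_gcd w1 w4)
        (two (Nat.gcd y2 y4) (Nat.gcd y1 y4) mG24 nG24v nG241 nG242 nG243 nG244 hwit mG14 nG14v nG141 nG142 nG143 nG144)
        dG34_4
        dG34_3
        (fun w w4 w3 => Nat.dvd_gcd w3 w4)
        (two (Nat.gcd y2 y4) (Nat.gcd y3 y4) mG24 nG24v nG241 nG242 nG243 nG244 hwit mG34 nG34v nG341 nG342 nG343 nG344)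
        dG13_1
        dG13_3
        (fun w w1 w3 => Nat.dvd_gcd w1 w3)
        (two (Nat.gcd y2 y4) (Nat.gcd y1 y3) mG24 nG24v nG241 nG242 nG243 nG244 hwit mG13 nG13v nG131 nG132 nG133 nG134)
        dT124_1
        (fun w w2 w4 w1 => Nat.dvd_gcd w1 (Nat.dvd_gcd w2 w4))
        (two (Nat.gcd y2 y4) (Nat.gcd y1 (Nat.gcd y2 y4)) mG24 nG24v nG241 nG242 nG243 nG244 hwit mT124 nT124v nT1241 nT1242 nT1243 nT1244)
        dT234_3
        (fun w w2 w4 w3 => Nat.dvd_gcd w2 (Nat.dvd_gcd w3 w4))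
        (two (Nat.gcd y2 y4) (Nat.gcd y2 (Nat.gcd y3 y4)) mG24 nG24v nG241 nG242 nG243 nG244 hwit mT234 nT234v nT2341 nT2342 nT2343 nT2344)
        dT123_3
        dT123_1
        (fun w w2 w1 w3 => Nat.dvd_gcd w1 (Nat.dvd_gcd w2 w3))
        (two (Nat.gcd y2 y4) (Nat.gcd y1 (Nat.gcd y2 y3)) mG24 nG24v nG241 nG242 nG243 nG244 hwit mT123 nT123v nT1231 nT1232 nT1233 nT1234)
        dT134_3
        dT134_1
        (fun w w4 w1 w3 => Nat.dvd_gcd w1 (Nat.dvd_gcd w3 w4))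
        (two (Nat.gcd y2 y4) (Nat.gcd y1 (Nat.gcd y3 y4)) mG24 nG24v nG241 nG242 nG243 nG244 hwit mT134 nT134v nT1341 nT1342 nT1343 nT1344)
      intro hcon
      apply hkey
      rw [← hcon]
      try ring
    · have hkey := m4pair v y3 y4 y1 y2 (Nat.gcd y3 y4) (Nat.gcd y1 (Nat.gcd y2 (Nat.gcd y3 y4))) (Nat.gcd y1 y3) (Nat.gcd y2 y3) (Nat.gcd y1 y4) (Nat.gcd y2 y4) (Nat.gcd y1 y2) (Nat.gcd y1 (Nat.gcd y3 y4)) (Nat.gcd y2 (Nat.gcd y3 y4)) (Nat.gcd y1 (Nat.gcd y2 y3)) (Nat.gcd y1 (Nat.gcd y2 y4))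
        hvpos
        hp3
        hp4
        hp1
        hp2
        dG34_3
        dG34_4
        nG343
        nG344
        nG341
        nG342
        bdy3
        bdy4
        bdy1
        bdy2
        nB3
        nB4
        nB1
        nB2
        (fun w w3 w4 w1 w2 => Nat.dvd_gcd w1 (Nat.dvd_gcd w2 (Nat.dvd_gcd w3 w4)))
        hwit
        bdG34
        dG13_3
        dG13_1
        (fun w w3 w1 => Nat.dvd_gcd w1 w3)
        (two (Nat.gcd y3 y4) (Nat.gcd y1 y3) mG34 nG34v nG341 nG342 nG343 nG344 hwit mG13 nG13v nG131 nG132 nG133 nG134)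
        dG23_3
        dG23_2
        (fun w w3 w2 => Nat.dvd_gcd w2 w3)
        (two (Nat.gcd y3 y4) (Nat.gcd y2 y3) mG34 nG34v nG341 nG342 nG343 nG344 hwit mG23 nG23v nG231 nG232 nG233 nG234)
        dG14_4
        dG14_1
        (fun w w4 w1 => Nat.dvd_gcd w1 w4)
        (two (Nat.gcd y3 y4) (Nat.gcd y1 y4) mG34 nG34v nG341 nG342 nG343 nG344 hwit mG14 nG14v nG141 nG142 nG143 nG144)
        dG24_4
        dG24_2
        (fun w w4 w2 => Nat.dvd_gcd w2 w4)
        (two (Nat.gcd y3 y4) (Nat.gcd y2 y4) mG34 nG34v nG341 nG342 nG343 nG344 hwit mG24 nG24v nG241 nG242 nG243 nG244)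
        dG12_1
        dG12_2
        (fun w w1 w2 => Nat.dvd_gcd w1 w2)
        (two (Nat.gcd y3 y4) (Nat.gcd y1 y2) mG34 nG34v nG341 nG342 nG343 nG344 hwit mG12 nG12v nG121 nG122 nG123 nG124)
        dT134_1
        (fun w w3 w4 w1 => Nat.dvd_gcd w1 (Nat.dvd_gcd w3 w4))
        (two (Nat.gcd y3 y4) (Nat.gcd y1 (Nat.gcd y3 y4)) mG34 nG34v nG341 nG342 nG343 nG344 hwit mT134 nT134v nT1341 nT1342 nT1343 nT1344)
        dT234_2
        (fun w w3 w4 w2 => Nat.dvd_gcd w2 (Nat.dvd_gcd w3 w4))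
        (two (Nat.gcd y3 y4) (Nat.gcd y2 (Nat.gcd y3 y4)) mG34 nG34v nG341 nG342 nG343 nG344 hwit mT234 nT234v nT2341 nT2342 nT2343 nT2344)
        dT123_2
        dT123_1
        (fun w w3 w1 w2 => Nat.dvd_gcd w1 (Nat.dvd_gcd w2 w3))
        (two (Nat.gcd y3 y4) (Nat.gcd y1 (Nat.gcd y2 y3)) mG34 nG34v nG341 nG342 nG343 nG344 hwit mT123 nT123v nT1231 nT1232 nT1233 nT1234)
        dT124_2
        dT124_1
        (fun w w4 w1 w2 => Nat.dvd_gcd w1 (Nat.dvd_gcd w2 w4))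
        (two (Nat.gcd y3 y4) (Nat.gcd y1 (Nat.gcd y2 y4)) mG34 nG34v nG341 nG342 nG343 nG344 hwit mT124 nT124v nT1241 nT1242 nT1243 nT1244)
      intro hcon
      apply hkey
      rw [← hcon]
      try ring
    · have hkey := m4triple v y1 y2 y3 y4 (Nat.gcd y1 (Nat.gcd y2 y3)) (Nat.gcd y1 (Nat.gcd y2 (Nat.gcd y3 y4))) (Nat.gcd y1 y2) (Nat.gcd y1 y3) (Nat.gcd y1 y4) (Nat.gcd y2 y3) (Nat.gcd y2 y4) (Nat.gcd y3 y4) (Nat.gcd y1 (Nat.gcd y2 y4)) (Nat.gcd y1 (Nat.gcd y3 y4)) (Nat.gcd y2 (Nat.gcd y3 y4))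
        hvpos
        hp1
        hp2
        hp3
        hp4
        dT123_1
        dT123_2
        dT123_3
        nT1231
        nT1232
        nT1233
        bdy1
        bdy2
        bdy3
        bdy4
        nB1
        nB2
        nB3
        nB4
        (fun w w1 w2 w3 w4 => Nat.dvd_gcd w1 (Nat.dvd_gcd w2 (Nat.dvd_gcd w3 w4)))
        hwit
        bdT123
        dG12_1
        dG12_2
        (fun w w1 w2 => Nat.dvd_gcd w1 w2)
        (two (Nat.gcd y1 (Nat.gcd y2 y3)) (Nat.gcd y1 y2) mT123 nT123v nT1231 nT1232 nT1233 nT1234 hwit mG12 nG12v nG121 nG122 nG123 nG124)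
        dG13_1
        dG13_3
        (fun w w1 w3 => Nat.dvd_gcd w1 w3)
        (two (Nat.gcd y1 (Nat.gcd y2 y3)) (Nat.gcd y1 y3) mT123 nT123v nT1231 nT1232 nT1233 nT1234 hwit mG13 nG13v nG131 nG132 nG133 nG134)
        dG14_1
        dG14_4
        (fun w w1 w4 => Nat.dvd_gcd w1 w4)
        (two (Nat.gcd y1 (Nat.gcd y2 y3)) (Nat.gcd y1 y4) mT123 nT123v nT1231 nT1232 nT1233 nT1234 hwit mG14 nG14v nG141 nG142 nG143 nG144)
        dG23_2
        dG23_3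
        (fun w w2 w3 => Nat.dvd_gcd w2 w3)
        (two (Nat.gcd y1 (Nat.gcd y2 y3)) (Nat.gcd y2 y3) mT123 nT123v nT1231 nT1232 nT1233 nT1234 hwit mG23 nG23v nG231 nG232 nG233 nG234)
        dG24_2
        dG24_4
        (fun w w2 w4 => Nat.dvd_gcd w2 w4)
        (two (Nat.gcd y1 (Nat.gcd y2 y3)) (Nat.gcd y2 y4) mT123 nT123v nT1231 nT1232 nT1233 nT1234 hwit mG24 nG24v nG241 nG242 nG243 nG244)
        dG34_3
        dG34_4
        (fun w w3 w4 => Nat.dvd_gcd w3 w4)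
        (two (Nat.gcd y1 (Nat.gcd y2 y3)) (Nat.gcd y3 y4) mT123 nT123v nT1231 nT1232 nT1233 nT1234 hwit mG34 nG34v nG341 nG342 nG343 nG344)
        dT124_4
        (fun w w1 w2 w4 => Nat.dvd_gcd w1 (Nat.dvd_gcd w2 w4))
        (two (Nat.gcd y1 (Nat.gcd y2 y3)) (Nat.gcd y1 (Nat.gcd y2 y4)) mT123 nT123v nT1231 nT1232 nT1233 nT1234 hwit mT124 nT124v nT1241 nT1242 nT1243 nT1244)
        dT134_4
        (fun w w1 w3 w4 => Nat.dvd_gcd w1 (Nat.dvd_gcd w3 w4))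
        (two (Nat.gcd y1 (Nat.gcd y2 y3)) (Nat.gcd y1 (Nat.gcd y3 y4)) mT123 nT123v nT1231 nT1232 nT1233 nT1234 hwit mT134 nT134v nT1341 nT1342 nT1343 nT1344)
        dT234_4
        (fun w w2 w3 w4 => Nat.dvd_gcd w2 (Nat.dvd_gcd w3 w4))
        (two (Nat.gcd y1 (Nat.gcd y2 y3)) (Nat.gcd y2 (Nat.gcd y3 y4)) mT123 nT123v nT1231 nT1232 nT1233 nT1234 hwit mT234 nT234v nT2341 nT2342 nT2343 nT2344)
      intro hcon
      apply hkey
      rw [← hcon]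
      try ring
    · have hkey := m4triple v y1 y2 y4 y3 (Nat.gcd y1 (Nat.gcd y2 y4)) (Nat.gcd y1 (Nat.gcd y2 (Nat.gcd y3 y4))) (Nat.gcd y1 y2) (Nat.gcd y1 y4) (Nat.gcd y1 y3) (Nat.gcd y2 y4) (Nat.gcd y2 y3) (Nat.gcd y3 y4) (Nat.gcd y1 (Nat.gcd y2 y3)) (Nat.gcd y1 (Nat.gcd y3 y4)) (Nat.gcd y2 (Nat.gcd y3 y4))
        hvpos
        hp1
        hp2
        hp4
        hp3
        dT124_1
        dT124_2
        dT124_4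
        nT1241
        nT1242
        nT1244
        bdy1
        bdy2
        bdy4
        bdy3
        nB1
        nB2
        nB4
        nB3
        (fun w w1 w2 w4 w3 => Nat.dvd_gcd w1 (Nat.dvd_gcd w2 (Nat.dvd_gcd w3 w4)))
        hwit
        bdT124
        dG12_1
        dG12_2
        (fun w w1 w2 => Nat.dvd_gcd w1 w2)
        (two (Nat.gcd y1 (Nat.gcd y2 y4)) (Nat.gcd y1 y2) mT124 nT124v nT1241 nT1242 nT1243 nT1244 hwit mG12 nG12v nG121 nG122 nG123 nG124)
        dG14_1
        dG14_4
        (fun w w1 w4 => Nat.dvd_gcd w1 w4)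
        (two (Nat.gcd y1 (Nat.gcd y2 y4)) (Nat.gcd y1 y4) mT124 nT124v nT1241 nT1242 nT1243 nT1244 hwit mG14 nG14v nG141 nG142 nG143 nG144)
        dG13_1
        dG13_3
        (fun w w1 w3 => Nat.dvd_gcd w1 w3)
        (two (Nat.gcd y1 (Nat.gcd y2 y4)) (Nat.gcd y1 y3) mT124 nT124v nT1241 nT1242 nT1243 nT1244 hwit mG13 nG13v nG131 nG132 nG133 nG134)
        dG24_2
        dG24_4
        (fun w w2 w4 => Nat.dvd_gcd w2 w4)
        (two (Nat.gcd y1 (Nat.gcd y2 y4)) (Nat.gcd y2 y4) mT124 nT124v nT1241 nT1242 nT1243 nT1244 hwit mG24 nG24v nG241 nG242 nG243 nG244)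
        dG23_2
        dG23_3
        (fun w w2 w3 => Nat.dvd_gcd w2 w3)
        (two (Nat.gcd y1 (Nat.gcd y2 y4)) (Nat.gcd y2 y3) mT124 nT124v nT1241 nT1242 nT1243 nT1244 hwit mG23 nG23v nG231 nG232 nG233 nG234)
        dG34_4
        dG34_3
        (fun w w4 w3 => Nat.dvd_gcd w3 w4)
        (two (Nat.gcd y1 (Nat.gcd y2 y4)) (Nat.gcd y3 y4) mT124 nT124v nT1241 nT1242 nT1243 nT1244 hwit mG34 nG34v nG341 nG342 nG343 nG344)
        dT123_3
        (fun w w1 w2 w3 => Nat.dvd_gcd w1 (Nat.dvd_gcd w2 w3))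
        (two (Nat.gcd y1 (Nat.gcd y2 y4)) (Nat.gcd y1 (Nat.gcd y2 y3)) mT124 nT124v nT1241 nT1242 nT1243 nT1244 hwit mT123 nT123v nT1231 nT1232 nT1233 nT1234)
        dT134_3
        (fun w w1 w4 w3 => Nat.dvd_gcd w1 (Nat.dvd_gcd w3 w4))
        (two (Nat.gcd y1 (Nat.gcd y2 y4)) (Nat.gcd y1 (Nat.gcd y3 y4)) mT124 nT124v nT1241 nT1242 nT1243 nT1244 hwit mT134 nT134v nT1341 nT1342 nT1343 nT1344)
        dT234_3
        (fun w w2 w4 w3 => Nat.dvd_gcd w2 (Nat.dvd_gcd w3 w4))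
        (two (Nat.gcd y1 (Nat.gcd y2 y4)) (Nat.gcd y2 (Nat.gcd y3 y4)) mT124 nT124v nT1241 nT1242 nT1243 nT1244 hwit mT234 nT234v nT2341 nT2342 nT2343 nT2344)
      intro hcon
      apply hkey
      rw [← hcon]
      try ring
    · have hkey := m4triple v y1 y3 y4 y2 (Nat.gcd y1 (Nat.gcd y3 y4)) (Nat.gcd y1 (Nat.gcd y2 (Nat.gcd y3 y4))) (Nat.gcd y1 y3) (Nat.gcd y1 y4) (Nat.gcd y1 y2) (Nat.gcd y3 y4) (Nat.gcd y2 y3) (Nat.gcd y2 y4) (Nat.gcd y1 (Nat.gcd y2 y3)) (Nat.gcd y1 (Nat.gcd y2 y4)) (Nat.gcd y2 (Nat.gcd y3 y4))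
        hvpos
        hp1
        hp3
        hp4
        hp2
        dT134_1
        dT134_3
        dT134_4
        nT1341
        nT1343
        nT1344
        bdy1
        bdy3
        bdy4
        bdy2
        nB1
        nB3
        nB4
        nB2
        (fun w w1 w3 w4 w2 => Nat.dvd_gcd w1 (Nat.dvd_gcd w2 (Nat.dvd_gcd w3 w4)))
        hwit
        bdT134
        dG13_1
        dG13_3
        (fun w w1 w3 => Nat.dvd_gcd w1 w3)
        (two (Nat.gcd y1 (Nat.gcd y3 y4)) (Nat.gcd y1 y3) mT134 nT134v nT1341 nT1342 nT1343 nT1344 hwit mG13 nG13v nG131 nG132 nG133 nG134)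
        dG14_1
        dG14_4
        (fun w w1 w4 => Nat.dvd_gcd w1 w4)
        (two (Nat.gcd y1 (Nat.gcd y3 y4)) (Nat.gcd y1 y4) mT134 nT134v nT1341 nT1342 nT1343 nT1344 hwit mG14 nG14v nG141 nG142 nG143 nG144)
        dG12_1
        dG12_2
        (fun w w1 w2 => Nat.dvd_gcd w1 w2)
        (two (Nat.gcd y1 (Nat.gcd y3 y4)) (Nat.gcd y1 y2) mT134 nT134v nT1341 nT1342 nT1343 nT1344 hwit mG12 nG12v nG121 nG122 nG123 nG124)
        dG34_3
        dG34_4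
        (fun w w3 w4 => Nat.dvd_gcd w3 w4)
        (two (Nat.gcd y1 (Nat.gcd y3 y4)) (Nat.gcd y3 y4) mT134 nT134v nT1341 nT1342 nT1343 nT1344 hwit mG34 nG34v nG341 nG342 nG343 nG344)
        dG23_3
        dG23_2
        (fun w w3 w2 => Nat.dvd_gcd w2 w3)
        (two (Nat.gcd y1 (Nat.gcd y3 y4)) (Nat.gcd y2 y3) mT134 nT134v nT1341 nT1342 nT1343 nT1344 hwit mG23 nG23v nG231 nG232 nG233 nG234)
        dG24_4
        dG24_2
        (fun w w4 w2 => Nat.dvd_gcd w2 w4)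
        (two (Nat.gcd y1 (Nat.gcd y3 y4)) (Nat.gcd y2 y4) mT134 nT134v nT1341 nT1342 nT1343 nT1344 hwit mG24 nG24v nG241 nG242 nG243 nG244)
        dT123_2
        (fun w w1 w3 w2 => Nat.dvd_gcd w1 (Nat.dvd_gcd w2 w3))
        (two (Nat.gcd y1 (Nat.gcd y3 y4)) (Nat.gcd y1 (Nat.gcd y2 y3)) mT134 nT134v nT1341 nT1342 nT1343 nT1344 hwit mT123 nT123v nT1231 nT1232 nT1233 nT1234)
        dT124_2
        (fun w w1 w4 w2 => Nat.dvd_gcd w1 (Nat.dvd_gcd w2 w4))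
        (two (Nat.gcd y1 (Nat.gcd y3 y4)) (Nat.gcd y1 (Nat.gcd y2 y4)) mT134 nT134v nT1341 nT1342 nT1343 nT1344 hwit mT124 nT124v nT1241 nT1242 nT1243 nT1244)
        dT234_2
        (fun w w3 w4 w2 => Nat.dvd_gcd w2 (Nat.dvd_gcd w3 w4))
        (two (Nat.gcd y1 (Nat.gcd y3 y4)) (Nat.gcd y2 (Nat.gcd y3 y4)) mT134 nT134v nT1341 nT1342 nT1343 nT1344 hwit mT234 nT234v nT2341 nT2342 nT2343 nT2344)
      intro hcon
      apply hkey
      rw [← hcon]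
      try ring
    · have hkey := m4triple v y2 y3 y4 y1 (Nat.gcd y2 (Nat.gcd y3 y4)) (Nat.gcd y1 (Nat.gcd y2 (Nat.gcd y3 y4))) (Nat.gcd y2 y3) (Nat.gcd y2 y4) (Nat.gcd y1 y2) (Nat.gcd y3 y4) (Nat.gcd y1 y3) (Nat.gcd y1 y4) (Nat.gcd y1 (Nat.gcd y2 y3)) (Nat.gcd y1 (Nat.gcd y2 y4)) (Nat.gcd y1 (Nat.gcd y3 y4))
        hvpos
        hp2
        hp3
        hp4
        hp1
        dT234_2
        dT234_3
        dT234_4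
        nT2342
        nT2343
        nT2344
        bdy2
        bdy3
        bdy4
        bdy1
        nB2
        nB3
        nB4
        nB1
        (fun w w2 w3 w4 w1 => Nat.dvd_gcd w1 (Nat.dvd_gcd w2 (Nat.dvd_gcd w3 w4)))
        hwit
        bdT234
        dG23_2
        dG23_3
        (fun w w2 w3 => Nat.dvd_gcd w2 w3)
        (two (Nat.gcd y2 (Nat.gcd y3 y4)) (Nat.gcd y2 y3) mT234 nT234v nT2341 nT2342 nT2343 nT2344 hwit mG23 nG23v nG231 nG232 nG233 nG234)
        dG24_2
        dG24_4
        (fun w w2 w4 => Nat.dvd_gcd w2 w4)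
        (two (Nat.gcd y2 (Nat.gcd y3 y4)) (Nat.gcd y2 y4) mT234 nT234v nT2341 nT2342 nT2343 nT2344 hwit mG24 nG24v nG241 nG242 nG243 nG244)
        dG12_2
        dG12_1
        (fun w w2 w1 => Nat.dvd_gcd w1 w2)
        (two (Nat.gcd y2 (Nat.gcd y3 y4)) (Nat.gcd y1 y2) mT234 nT234v nT2341 nT2342 nT2343 nT2344 hwit mG12 nG12v nG121 nG122 nG123 nG124)
        dG34_3
        dG34_4
        (fun w w3 w4 => Nat.dvd_gcd w3 w4)
        (two (Nat.gcd y2 (Nat.gcd y3 y4)) (Nat.gcd y3 y4) mT234 nT234v nT2341 nT2342 nT2343 nT2344 hwit mG34 nG34v nG341 nG342 nG343 nG344)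
        dG13_3
        dG13_1
        (fun w w3 w1 => Nat.dvd_gcd w1 w3)
        (two (Nat.gcd y2 (Nat.gcd y3 y4)) (Nat.gcd y1 y3) mT234 nT234v nT2341 nT2342 nT2343 nT2344 hwit mG13 nG13v nG131 nG132 nG133 nG134)
        dG14_4
        dG14_1
        (fun w w4 w1 => Nat.dvd_gcd w1 w4)
        (two (Nat.gcd y2 (Nat.gcd y3 y4)) (Nat.gcd y1 y4) mT234 nT234v nT2341 nT2342 nT2343 nT2344 hwit mG14 nG14v nG141 nG142 nG143 nG144)
        dT123_1
        (fun w w2 w3 w1 => Nat.dvd_gcd w1 (Nat.dvd_gcd w2 w3))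
        (two (Nat.gcd y2 (Nat.gcd y3 y4)) (Nat.gcd y1 (Nat.gcd y2 y3)) mT234 nT234v nT2341 nT2342 nT2343 nT2344 hwit mT123 nT123v nT1231 nT1232 nT1233 nT1234)
        dT124_1
        (fun w w2 w4 w1 => Nat.dvd_gcd w1 (Nat.dvd_gcd w2 w4))
        (two (Nat.gcd y2 (Nat.gcd y3 y4)) (Nat.gcd y1 (Nat.gcd y2 y4)) mT234 nT234v nT2341 nT2342 nT2343 nT2344 hwit mT124 nT124v nT1241 nT1242 nT1243 nT1244)
        dT134_1
        (fun w w3 w4 w1 => Nat.dvd_gcd w1 (Nat.dvd_gcd w3 w4))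
        (two (Nat.gcd y2 (Nat.gcd y3 y4)) (Nat.gcd y1 (Nat.gcd y3 y4)) mT234 nT234v nT2341 nT2342 nT2343 nT2344 hwit mT134 nT134v nT1341 nT1342 nT1343 nT1344)
      intro hcon
      apply hkey
      rw [← hcon]
      try ring

set_option maxHeartbeats 2000000 in
lemma case5 (S : Finset ℕ) (h0 : 0 ∉ S) (hg : ∀ a ∈ S, ∀ b ∈ S, Nat.gcd a b ∈ S)
    (hcard : S.card ≤ 7) (v y1 y2 y3 y4 y5 : ℕ) (hv : v ∈ S)
    (h1 : y1 ∈ S) (h2 : y2 ∈ S) (h3 : y3 ∈ S) (h4 : y4 ∈ S) (h5 : y5 ∈ S)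
    (hd1 : y1 ∣ v) (hd2 : y2 ∣ v) (hd3 : y3 ∣ v) (hd4 : y4 ∣ v) (hd5 : y5 ∣ v)
    (hne1 : y1 ≠ v) (hne2 : y2 ≠ v) (hne3 : y3 ≠ v) (hne4 : y4 ≠ v) (hne5 : y5 ≠ v)
    (nd12 : ¬ y1 ∣ y2) (nd13 : ¬ y1 ∣ y3) (nd14 : ¬ y1 ∣ y4) (nd15 : ¬ y1 ∣ y5) (nd21 : ¬ y2 ∣ y1)
    (nd23 : ¬ y2 ∣ y3) (nd24 : ¬ y2 ∣ y4) (nd25 : ¬ y2 ∣ y5) (nd31 : ¬ y3 ∣ y1) (nd32 : ¬ y3 ∣ y2)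
    (nd34 : ¬ y3 ∣ y4) (nd35 : ¬ y3 ∣ y5) (nd41 : ¬ y4 ∣ y1) (nd42 : ¬ y4 ∣ y2) (nd43 : ¬ y4 ∣ y3)
    (nd45 : ¬ y4 ∣ y5) (nd51 : ¬ y5 ∣ y1) (nd52 : ¬ y5 ∣ y2) (nd53 : ¬ y5 ∣ y3) (nd54 : ¬ y5 ∣ y4) :
    1/(v:ℚ) - 1/(y1:ℚ) - 1/(y2:ℚ) - 1/(y3:ℚ) - 1/(y4:ℚ) - 1/(y5:ℚ) + 1/((Nat.gcd y1 y2 : ℕ):ℚ) + 1/((Nat.gcd y1 y3 : ℕ):ℚ) + 1/((Nat.gcd y1 y4 : ℕ):ℚ) + 1/((Nat.gcd y1 y5 : ℕ):ℚ) + 1/((Nat.gcd y2 y3 : ℕ):ℚ) + 1/((Nat.gcd y2 y4 : ℕ):ℚ) + 1/((Nat.gcd y2 y5 : ℕ):ℚ) + 1/((Nat.gcd y3 y4 : ℕ):ℚ) + 1/((Nat.gcd y3 y5 : ℕ):ℚ) + 1/((Nat.gcd y4 y5 : ℕ):ℚ) - 1/((Nat.gcd y1 (Nat.gcd y2 y3)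 : ℕ):ℚ) - 1/((Nat.gcd y1 (Nat.gcd y2 y4) : ℕ):ℚ) - 1/((Nat.gcd y1 (Nat.gcd y2 y5) : ℕ):ℚ) - 1/((Nat.gcd y1 (Nat.gcd y3 y4) : ℕ):ℚ) - 1/((Nat.gcd y1 (Nat.gcd y3 y5) : ℕ):ℚ) - 1/((Nat.gcd y1 (Nat.gcd y4 y5) : ℕ):ℚ) - 1/((Nat.gcd y2 (Nat.gcd y3 y4) : ℕ):ℚ) - 1/((Nat.gcd y2 (Nat.gcd y3 y5) : ℕ):ℚ) - 1/((Nat.gcd y2 (Nat.gcd y4 y5) : ℕ):ℚ) - 1/((Nat.gcd y3 (Nat.gcd y4 y5) : ℕ):ℚ) + 1/((Nat.gcd y1 (Nat.gcd y2 (Nat.gcd y3 y4)) : ℕ):ℚ) + 1/((Nat.gcd y1 (Nat.gcd y2 (Nat.gcd y3 y5)) : ℕ):ℚ) + 1/((Nat.gcd y1 (Nat.gcd y2 (Nat.gcd y4 y5)) : ℕ):ℚ) + 1/((Nat.gcd y1 (Nat.gcd y3 (Nat.gcd y4 y5)) : ℕ):ℚ) + 1/((Nat.gcd y2 (Nat.gcd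 y3 (Nat.gcd y4 y5)) : ℕ):ℚ) - 1/((Nat.gcd y1 (Nat.gcd y2 (Nat.gcd y3 (Nat.gcd y4 y5))) : ℕ):ℚ) ≠ 0 := by
  have hvpos : 0 < v := Nat.pos_of_ne_zero (by rintro rfl; exact h0 hv)
  have hp1 : 0 < y1 := Nat.pos_of_ne_zero (by rintro rfl; exact h0 h1)
  have hp2 : 0 < y2 := Nat.pos_of_ne_zero (by rintro rfl; exact h0 h2)
  have hp3 : 0 < y3 := Nat.pos_of_ne_zero (by rintro rfl; exact h0 h3)
  have hp4 : 0 < y4 := Nat.pos_of_ne_zero (by rintro rfl; exact h0 h4)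
  have hp5 : 0 < y5 := Nat.pos_of_ne_zero (by rintro rfl; exact h0 h5)
  have hy12 : y1 ≠ y2 := fun h => nd12 (h ▸ dvd_rfl)
  have hy13 : y1 ≠ y3 := fun h => nd13 (h ▸ dvd_rfl)
  have hy14 : y1 ≠ y4 := fun h => nd14 (h ▸ dvd_rfl)
  have hy15 : y1 ≠ y5 := fun h => nd15 (h ▸ dvd_rfl)
  have hy23 : y2 ≠ y3 := fun h => nd23 (h ▸ dvd_rfl)
  have hy24 : y2 ≠ y4 := fun h => nd24 (h ▸ dvd_rfl)
  have hy25 : y2 ≠ y5 := fun h => nd25 (h ▸ dvd_rfl)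
  have hy34 : y3 ≠ y4 := fun h => nd34 (h ▸ dvd_rfl)
  have hy35 : y3 ≠ y5 := fun h => nd35 (h ▸ dvd_rfl)
  have hy45 : y4 ≠ y5 := fun h => nd45 (h ▸ dvd_rfl)
  have dG12_1 : (Nat.gcd y1 y2) ∣ y1 := Nat.gcd_dvd_left _ _
  have dG12_2 : (Nat.gcd y1 y2) ∣ y2 := Nat.gcd_dvd_right _ _
  have mG12 : (Nat.gcd y1 y2) ∈ S := hg _ h1 _ h2
  have nG12v : (Nat.gcd y1 y2) ≠ v := fun h => hne1 (Nat.dvd_antisymm hd1 (h ▸ dG12_1))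
  have nG121 : (Nat.gcd y1 y2) ≠ y1 := fun h => nd12 (h ▸ dG12_2)
  have nG122 : (Nat.gcd y1 y2) ≠ y2 := fun h => nd21 (h ▸ dG12_1)
  have nG123 : (Nat.gcd y1 y2) ≠ y3 := fun h => nd31 (h ▸ dG12_1)
  have nG124 : (Nat.gcd y1 y2) ≠ y4 := fun h => nd41 (h ▸ dG12_1)
  have nG125 : (Nat.gcd y1 y2) ≠ y5 := fun h => nd51 (h ▸ dG12_1)
  have dG13_1 : (Nat.gcd y1 y3) ∣ y1 := Nat.gcd_dvd_left _ _
  have dG13_3 : (Nat.gcd y1 y3) ∣ y3 := Nat.gcd_dvd_right _ _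
  have mG13 : (Nat.gcd y1 y3) ∈ S := hg _ h1 _ h3
  have nG13v : (Nat.gcd y1 y3) ≠ v := fun h => hne1 (Nat.dvd_antisymm hd1 (h ▸ dG13_1))
  have nG131 : (Nat.gcd y1 y3) ≠ y1 := fun h => nd13 (h ▸ dG13_3)
  have nG132 : (Nat.gcd y1 y3) ≠ y2 := fun h => nd21 (h ▸ dG13_1)
  have nG133 : (Nat.gcd y1 y3) ≠ y3 := fun h => nd31 (h ▸ dG13_1)
  have nG134 : (Nat.gcd y1 y3) ≠ y4 := fun h => nd41 (h ▸ dG13_1)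
  have nG135 : (Nat.gcd y1 y3) ≠ y5 := fun h => nd51 (h ▸ dG13_1)
  have dG14_1 : (Nat.gcd y1 y4) ∣ y1 := Nat.gcd_dvd_left _ _
  have dG14_4 : (Nat.gcd y1 y4) ∣ y4 := Nat.gcd_dvd_right _ _
  have mG14 : (Nat.gcd y1 y4) ∈ S := hg _ h1 _ h4
  have nG14v : (Nat.gcd y1 y4) ≠ v := fun h => hne1 (Nat.dvd_antisymm hd1 (h ▸ dG14_1))
  have nG141 : (Nat.gcd y1 y4) ≠ y1 := fun h => nd14 (h ▸ dG14_4)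
  have nG142 : (Nat.gcd y1 y4) ≠ y2 := fun h => nd21 (h ▸ dG14_1)
  have nG143 : (Nat.gcd y1 y4) ≠ y3 := fun h => nd31 (h ▸ dG14_1)
  have nG144 : (Nat.gcd y1 y4) ≠ y4 := fun h => nd41 (h ▸ dG14_1)
  have nG145 : (Nat.gcd y1 y4) ≠ y5 := fun h => nd51 (h ▸ dG14_1)
  have dG15_1 : (Nat.gcd y1 y5) ∣ y1 := Nat.gcd_dvd_left _ _
  have dG15_5 : (Nat.gcd y1 y5) ∣ y5 := Nat.gcd_dvd_right _ _
  have mG15 : (Nat.gcd y1 y5) ∈ S := hg _ h1 _ h5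
  have nG15v : (Nat.gcd y1 y5) ≠ v := fun h => hne1 (Nat.dvd_antisymm hd1 (h ▸ dG15_1))
  have nG151 : (Nat.gcd y1 y5) ≠ y1 := fun h => nd15 (h ▸ dG15_5)
  have nG152 : (Nat.gcd y1 y5) ≠ y2 := fun h => nd21 (h ▸ dG15_1)
  have nG153 : (Nat.gcd y1 y5) ≠ y3 := fun h => nd31 (h ▸ dG15_1)
  have nG154 : (Nat.gcd y1 y5) ≠ y4 := fun h => nd41 (h ▸ dG15_1)
  have nG155 : (Nat.gcd y1 y5) ≠ y5 := fun h => nd51 (h ▸ dG15_1)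
  have dG23_2 : (Nat.gcd y2 y3) ∣ y2 := Nat.gcd_dvd_left _ _
  have dG23_3 : (Nat.gcd y2 y3) ∣ y3 := Nat.gcd_dvd_right _ _
  have mG23 : (Nat.gcd y2 y3) ∈ S := hg _ h2 _ h3
  have nG23v : (Nat.gcd y2 y3) ≠ v := fun h => hne2 (Nat.dvd_antisymm hd2 (h ▸ dG23_2))
  have nG231 : (Nat.gcd y2 y3) ≠ y1 := fun h => nd12 (h ▸ dG23_2)
  have nG232 : (Nat.gcd y2 y3) ≠ y2 := fun h => nd23 (h ▸ dG23_3)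
  have nG233 : (Nat.gcd y2 y3) ≠ y3 := fun h => nd32 (h ▸ dG23_2)
  have nG234 : (Nat.gcd y2 y3) ≠ y4 := fun h => nd42 (h ▸ dG23_2)
  have nG235 : (Nat.gcd y2 y3) ≠ y5 := fun h => nd52 (h ▸ dG23_2)
  have dG24_2 : (Nat.gcd y2 y4) ∣ y2 := Nat.gcd_dvd_left _ _
  have dG24_4 : (Nat.gcd y2 y4) ∣ y4 := Nat.gcd_dvd_right _ _
  have mG24 : (Nat.gcd y2 y4) ∈ S := hg _ h2 _ h4
  have nG24v : (Nat.gcd y2 y4) ≠ v := fun h => hne2 (Nat.dvd_antisymm hd2 (h ▸ dG24_2))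
  have nG241 : (Nat.gcd y2 y4) ≠ y1 := fun h => nd12 (h ▸ dG24_2)
  have nG242 : (Nat.gcd y2 y4) ≠ y2 := fun h => nd24 (h ▸ dG24_4)
  have nG243 : (Nat.gcd y2 y4) ≠ y3 := fun h => nd32 (h ▸ dG24_2)
  have nG244 : (Nat.gcd y2 y4) ≠ y4 := fun h => nd42 (h ▸ dG24_2)
  have nG245 : (Nat.gcd y2 y4) ≠ y5 := fun h => nd52 (h ▸ dG24_2)
  have dG25_2 : (Nat.gcd y2 y5) ∣ y2 := Nat.gcd_dvd_left _ _
  have dG25_5 : (Nat.gcd y2 y5) ∣ y5 := Nat.gcd_dvd_right _ _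
  have mG25 : (Nat.gcd y2 y5) ∈ S := hg _ h2 _ h5
  have nG25v : (Nat.gcd y2 y5) ≠ v := fun h => hne2 (Nat.dvd_antisymm hd2 (h ▸ dG25_2))
  have nG251 : (Nat.gcd y2 y5) ≠ y1 := fun h => nd12 (h ▸ dG25_2)
  have nG252 : (Nat.gcd y2 y5) ≠ y2 := fun h => nd25 (h ▸ dG25_5)
  have nG253 : (Nat.gcd y2 y5) ≠ y3 := fun h => nd32 (h ▸ dG25_2)
  have nG254 : (Nat.gcd y2 y5) ≠ y4 := fun h => nd42 (h ▸ dG25_2)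
  have nG255 : (Nat.gcd y2 y5) ≠ y5 := fun h => nd52 (h ▸ dG25_2)
  have dG34_3 : (Nat.gcd y3 y4) ∣ y3 := Nat.gcd_dvd_left _ _
  have dG34_4 : (Nat.gcd y3 y4) ∣ y4 := Nat.gcd_dvd_right _ _
  have mG34 : (Nat.gcd y3 y4) ∈ S := hg _ h3 _ h4
  have nG34v : (Nat.gcd y3 y4) ≠ v := fun h => hne3 (Nat.dvd_antisymm hd3 (h ▸ dG34_3))
  have nG341 : (Nat.gcd y3 y4) ≠ y1 := fun h => nd13 (h ▸ dG34_3)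
  have nG342 : (Nat.gcd y3 y4) ≠ y2 := fun h => nd23 (h ▸ dG34_3)
  have nG343 : (Nat.gcd y3 y4) ≠ y3 := fun h => nd34 (h ▸ dG34_4)
  have nG344 : (Nat.gcd y3 y4) ≠ y4 := fun h => nd43 (h ▸ dG34_3)
  have nG345 : (Nat.gcd y3 y4) ≠ y5 := fun h => nd53 (h ▸ dG34_3)
  have dG35_3 : (Nat.gcd y3 y5) ∣ y3 := Nat.gcd_dvd_left _ _
  have dG35_5 : (Nat.gcd y3 y5) ∣ y5 := Nat.gcd_dvd_right _ _
  have mG35 : (Nat.gcd y3 y5) ∈ S := hg _ h3 _ h5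
  have nG35v : (Nat.gcd y3 y5) ≠ v := fun h => hne3 (Nat.dvd_antisymm hd3 (h ▸ dG35_3))
  have nG351 : (Nat.gcd y3 y5) ≠ y1 := fun h => nd13 (h ▸ dG35_3)
  have nG352 : (Nat.gcd y3 y5) ≠ y2 := fun h => nd23 (h ▸ dG35_3)
  have nG353 : (Nat.gcd y3 y5) ≠ y3 := fun h => nd35 (h ▸ dG35_5)
  have nG354 : (Nat.gcd y3 y5) ≠ y4 := fun h => nd43 (h ▸ dG35_3)
  have nG355 : (Nat.gcd y3 y5) ≠ y5 := fun h => nd53 (h ▸ dG35_3)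
  have dG45_4 : (Nat.gcd y4 y5) ∣ y4 := Nat.gcd_dvd_left _ _
  have dG45_5 : (Nat.gcd y4 y5) ∣ y5 := Nat.gcd_dvd_right _ _
  have mG45 : (Nat.gcd y4 y5) ∈ S := hg _ h4 _ h5
  have nG45v : (Nat.gcd y4 y5) ≠ v := fun h => hne4 (Nat.dvd_antisymm hd4 (h ▸ dG45_4))
  have nG451 : (Nat.gcd y4 y5) ≠ y1 := fun h => nd14 (h ▸ dG45_4)
  have nG452 : (Nat.gcd y4 y5) ≠ y2 := fun h => nd24 (h ▸ dG45_4)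
  have nG453 : (Nat.gcd y4 y5) ≠ y3 := fun h => nd34 (h ▸ dG45_4)
  have nG454 : (Nat.gcd y4 y5) ≠ y4 := fun h => nd45 (h ▸ dG45_5)
  have nG455 : (Nat.gcd y4 y5) ≠ y5 := fun h => nd54 (h ▸ dG45_4)
  have dT123_1 : (Nat.gcd y1 (Nat.gcd y2 y3)) ∣ y1 := Nat.gcd_dvd_left _ _
  have dT123_2 : (Nat.gcd y1 (Nat.gcd y2 y3)) ∣ y2 := (Nat.gcd_dvd_right _ _).trans (Nat.gcd_dvd_left _ _)
  have dT123_3 : (Nat.gcd y1 (Nat.gcd y2 y3)) ∣ y3 := (Nat.gcd_dvd_right _ _).trans (Nat.gcd_dvd_right _ _)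
  have mT123 : (Nat.gcd y1 (Nat.gcd y2 y3)) ∈ S := hg _ h1 _ (hg _ h2 _ h3)
  have nT123v : (Nat.gcd y1 (Nat.gcd y2 y3)) ≠ v := fun h => hne1 (Nat.dvd_antisymm hd1 (h ▸ dT123_1))
  have nT1231 : (Nat.gcd y1 (Nat.gcd y2 y3)) ≠ y1 := fun h => nd12 (h ▸ dT123_2)
  have nT1232 : (Nat.gcd y1 (Nat.gcd y2 y3)) ≠ y2 := fun h => nd21 (h ▸ dT123_1)
  have nT1233 : (Nat.gcd y1 (Nat.gcd y2 y3)) ≠ y3 := fun h => nd31 (h ▸ dT123_1)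
  have nT1234 : (Nat.gcd y1 (Nat.gcd y2 y3)) ≠ y4 := fun h => nd41 (h ▸ dT123_1)
  have nT1235 : (Nat.gcd y1 (Nat.gcd y2 y3)) ≠ y5 := fun h => nd51 (h ▸ dT123_1)
  have dT124_1 : (Nat.gcd y1 (Nat.gcd y2 y4)) ∣ y1 := Nat.gcd_dvd_left _ _
  have dT124_2 : (Nat.gcd y1 (Nat.gcd y2 y4)) ∣ y2 := (Nat.gcd_dvd_right _ _).trans (Nat.gcd_dvd_left _ _)
  have dT124_4 : (Nat.gcd y1 (Nat.gcd y2 y4)) ∣ y4 := (Nat.gcd_dvd_right _ _).trans (Nat.gcd_dvd_right _ _)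
  have mT124 : (Nat.gcd y1 (Nat.gcd y2 y4)) ∈ S := hg _ h1 _ (hg _ h2 _ h4)
  have nT124v : (Nat.gcd y1 (Nat.gcd y2 y4)) ≠ v := fun h => hne1 (Nat.dvd_antisymm hd1 (h ▸ dT124_1))
  have nT1241 : (Nat.gcd y1 (Nat.gcd y2 y4)) ≠ y1 := fun h => nd12 (h ▸ dT124_2)
  have nT1242 : (Nat.gcd y1 (Nat.gcd y2 y4)) ≠ y2 := fun h => nd21 (h ▸ dT124_1)
  have nT1243 : (Nat.gcd y1 (Nat.gcd y2 y4)) ≠ y3 := fun h => nd31 (h ▸ dT124_1)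
  have nT1244 : (Nat.gcd y1 (Nat.gcd y2 y4)) ≠ y4 := fun h => nd41 (h ▸ dT124_1)
  have nT1245 : (Nat.gcd y1 (Nat.gcd y2 y4)) ≠ y5 := fun h => nd51 (h ▸ dT124_1)
  have dT125_1 : (Nat.gcd y1 (Nat.gcd y2 y5)) ∣ y1 := Nat.gcd_dvd_left _ _
  have dT125_2 : (Nat.gcd y1 (Nat.gcd y2 y5)) ∣ y2 := (Nat.gcd_dvd_right _ _).trans (Nat.gcd_dvd_left _ _)
  have dT125_5 : (Nat.gcd y1 (Nat.gcd y2 y5)) ∣ y5 := (Nat.gcd_dvd_right _ _).trans (Nat.gcd_dvd_right _ _)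
  have mT125 : (Nat.gcd y1 (Nat.gcd y2 y5)) ∈ S := hg _ h1 _ (hg _ h2 _ h5)
  have nT125v : (Nat.gcd y1 (Nat.gcd y2 y5)) ≠ v := fun h => hne1 (Nat.dvd_antisymm hd1 (h ▸ dT125_1))
  have nT1251 : (Nat.gcd y1 (Nat.gcd y2 y5)) ≠ y1 := fun h => nd12 (h ▸ dT125_2)
  have nT1252 : (Nat.gcd y1 (Nat.gcd y2 y5)) ≠ y2 := fun h => nd21 (h ▸ dT125_1)
  have nT1253 : (Nat.gcd y1 (Nat.gcd y2 y5)) ≠ y3 := fun h => nd31 (h ▸ dT125_1)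
  have nT1254 : (Nat.gcd y1 (Nat.gcd y2 y5)) ≠ y4 := fun h => nd41 (h ▸ dT125_1)
  have nT1255 : (Nat.gcd y1 (Nat.gcd y2 y5)) ≠ y5 := fun h => nd51 (h ▸ dT125_1)
  have dT134_1 : (Nat.gcd y1 (Nat.gcd y3 y4)) ∣ y1 := Nat.gcd_dvd_left _ _
  have dT134_3 : (Nat.gcd y1 (Nat.gcd y3 y4)) ∣ y3 := (Nat.gcd_dvd_right _ _).trans (Nat.gcd_dvd_left _ _)
  have dT134_4 : (Nat.gcd y1 (Nat.gcd y3 y4)) ∣ y4 := (Nat.gcd_dvd_right _ _).trans (Nat.gcd_dvd_right _ _)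
  have mT134 : (Nat.gcd y1 (Nat.gcd y3 y4)) ∈ S := hg _ h1 _ (hg _ h3 _ h4)
  have nT134v : (Nat.gcd y1 (Nat.gcd y3 y4)) ≠ v := fun h => hne1 (Nat.dvd_antisymm hd1 (h ▸ dT134_1))
  have nT1341 : (Nat.gcd y1 (Nat.gcd y3 y4)) ≠ y1 := fun h => nd13 (h ▸ dT134_3)
  have nT1342 : (Nat.gcd y1 (Nat.gcd y3 y4)) ≠ y2 := fun h => nd21 (h ▸ dT134_1)
  have nT1343 : (Nat.gcd y1 (Nat.gcd y3 y4)) ≠ y3 := fun h => nd31 (h ▸ dT134_1)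
  have nT1344 : (Nat.gcd y1 (Nat.gcd y3 y4)) ≠ y4 := fun h => nd41 (h ▸ dT134_1)
  have nT1345 : (Nat.gcd y1 (Nat.gcd y3 y4)) ≠ y5 := fun h => nd51 (h ▸ dT134_1)
  have dT135_1 : (Nat.gcd y1 (Nat.gcd y3 y5)) ∣ y1 := Nat.gcd_dvd_left _ _
  have dT135_3 : (Nat.gcd y1 (Nat.gcd y3 y5)) ∣ y3 := (Nat.gcd_dvd_right _ _).trans (Nat.gcd_dvd_left _ _)
  have dT135_5 : (Nat.gcd y1 (Nat.gcd y3 y5)) ∣ y5 := (Nat.gcd_dvd_right _ _).trans (Nat.gcd_dvd_right _ _)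
  have mT135 : (Nat.gcd y1 (Nat.gcd y3 y5)) ∈ S := hg _ h1 _ (hg _ h3 _ h5)
  have nT135v : (Nat.gcd y1 (Nat.gcd y3 y5)) ≠ v := fun h => hne1 (Nat.dvd_antisymm hd1 (h ▸ dT135_1))
  have nT1351 : (Nat.gcd y1 (Nat.gcd y3 y5)) ≠ y1 := fun h => nd13 (h ▸ dT135_3)
  have nT1352 : (Nat.gcd y1 (Nat.gcd y3 y5)) ≠ y2 := fun h => nd21 (h ▸ dT135_1)
  have nT1353 : (Nat.gcd y1 (Nat.gcd y3 y5)) ≠ y3 := fun h => nd31 (h ▸ dT135_1)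
  have nT1354 : (Nat.gcd y1 (Nat.gcd y3 y5)) ≠ y4 := fun h => nd41 (h ▸ dT135_1)
  have nT1355 : (Nat.gcd y1 (Nat.gcd y3 y5)) ≠ y5 := fun h => nd51 (h ▸ dT135_1)
  have dT145_1 : (Nat.gcd y1 (Nat.gcd y4 y5)) ∣ y1 := Nat.gcd_dvd_left _ _
  have dT145_4 : (Nat.gcd y1 (Nat.gcd y4 y5)) ∣ y4 := (Nat.gcd_dvd_right _ _).trans (Nat.gcd_dvd_left _ _)
  have dT145_5 : (Nat.gcd y1 (Nat.gcd y4 y5)) ∣ y5 := (Nat.gcd_dvd_right _ _).trans (Nat.gcd_dvd_right _ _)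
  have mT145 : (Nat.gcd y1 (Nat.gcd y4 y5)) ∈ S := hg _ h1 _ (hg _ h4 _ h5)
  have nT145v : (Nat.gcd y1 (Nat.gcd y4 y5)) ≠ v := fun h => hne1 (Nat.dvd_antisymm hd1 (h ▸ dT145_1))
  have nT1451 : (Nat.gcd y1 (Nat.gcd y4 y5)) ≠ y1 := fun h => nd14 (h ▸ dT145_4)
  have nT1452 : (Nat.gcd y1 (Nat.gcd y4 y5)) ≠ y2 := fun h => nd21 (h ▸ dT145_1)
  have nT1453 : (Nat.gcd y1 (Nat.gcd y4 y5)) ≠ y3 := fun h => nd31 (h ▸ dT145_1)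
  have nT1454 : (Nat.gcd y1 (Nat.gcd y4 y5)) ≠ y4 := fun h => nd41 (h ▸ dT145_1)
  have nT1455 : (Nat.gcd y1 (Nat.gcd y4 y5)) ≠ y5 := fun h => nd51 (h ▸ dT145_1)
  have dT234_2 : (Nat.gcd y2 (Nat.gcd y3 y4)) ∣ y2 := Nat.gcd_dvd_left _ _
  have dT234_3 : (Nat.gcd y2 (Nat.gcd y3 y4)) ∣ y3 := (Nat.gcd_dvd_right _ _).trans (Nat.gcd_dvd_left _ _)
  have dT234_4 : (Nat.gcd y2 (Nat.gcd y3 y4)) ∣ y4 := (Nat.gcd_dvd_right _ _).trans (Nat.gcd_dvd_right _ _)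
  have mT234 : (Nat.gcd y2 (Nat.gcd y3 y4)) ∈ S := hg _ h2 _ (hg _ h3 _ h4)
  have nT234v : (Nat.gcd y2 (Nat.gcd y3 y4)) ≠ v := fun h => hne2 (Nat.dvd_antisymm hd2 (h ▸ dT234_2))
  have nT2341 : (Nat.gcd y2 (Nat.gcd y3 y4)) ≠ y1 := fun h => nd12 (h ▸ dT234_2)
  have nT2342 : (Nat.gcd y2 (Nat.gcd y3 y4)) ≠ y2 := fun h => nd23 (h ▸ dT234_3)
  have nT2343 : (Nat.gcd y2 (Nat.gcd y3 y4)) ≠ y3 := fun h => nd32 (h ▸ dT234_2)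
  have nT2344 : (Nat.gcd y2 (Nat.gcd y3 y4)) ≠ y4 := fun h => nd42 (h ▸ dT234_2)
  have nT2345 : (Nat.gcd y2 (Nat.gcd y3 y4)) ≠ y5 := fun h => nd52 (h ▸ dT234_2)
  have dT235_2 : (Nat.gcd y2 (Nat.gcd y3 y5)) ∣ y2 := Nat.gcd_dvd_left _ _
  have dT235_3 : (Nat.gcd y2 (Nat.gcd y3 y5)) ∣ y3 := (Nat.gcd_dvd_right _ _).trans (Nat.gcd_dvd_left _ _)
  have dT235_5 : (Nat.gcd y2 (Nat.gcd y3 y5)) ∣ y5 := (Nat.gcd_dvd_right _ _).trans (Nat.gcd_dvd_right _ _)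
  have mT235 : (Nat.gcd y2 (Nat.gcd y3 y5)) ∈ S := hg _ h2 _ (hg _ h3 _ h5)
  have nT235v : (Nat.gcd y2 (Nat.gcd y3 y5)) ≠ v := fun h => hne2 (Nat.dvd_antisymm hd2 (h ▸ dT235_2))
  have nT2351 : (Nat.gcd y2 (Nat.gcd y3 y5)) ≠ y1 := fun h => nd12 (h ▸ dT235_2)
  have nT2352 : (Nat.gcd y2 (Nat.gcd y3 y5)) ≠ y2 := fun h => nd23 (h ▸ dT235_3)
  have nT2353 : (Nat.gcd y2 (Nat.gcd y3 y5)) ≠ y3 := fun h => nd32 (h ▸ dT235_2)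
  have nT2354 : (Nat.gcd y2 (Nat.gcd y3 y5)) ≠ y4 := fun h => nd42 (h ▸ dT235_2)
  have nT2355 : (Nat.gcd y2 (Nat.gcd y3 y5)) ≠ y5 := fun h => nd52 (h ▸ dT235_2)
  have dT245_2 : (Nat.gcd y2 (Nat.gcd y4 y5)) ∣ y2 := Nat.gcd_dvd_left _ _
  have dT245_4 : (Nat.gcd y2 (Nat.gcd y4 y5)) ∣ y4 := (Nat.gcd_dvd_right _ _).trans (Nat.gcd_dvd_left _ _)
  have dT245_5 : (Nat.gcd y2 (Nat.gcd y4 y5)) ∣ y5 := (Nat.gcd_dvd_right _ _).trans (Nat.gcd_dvd_right _ _)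
  have mT245 : (Nat.gcd y2 (Nat.gcd y4 y5)) ∈ S := hg _ h2 _ (hg _ h4 _ h5)
  have nT245v : (Nat.gcd y2 (Nat.gcd y4 y5)) ≠ v := fun h => hne2 (Nat.dvd_antisymm hd2 (h ▸ dT245_2))
  have nT2451 : (Nat.gcd y2 (Nat.gcd y4 y5)) ≠ y1 := fun h => nd12 (h ▸ dT245_2)
  have nT2452 : (Nat.gcd y2 (Nat.gcd y4 y5)) ≠ y2 := fun h => nd24 (h ▸ dT245_4)
  have nT2453 : (Nat.gcd y2 (Nat.gcd y4 y5)) ≠ y3 := fun h => nd32 (h ▸ dT245_2)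
  have nT2454 : (Nat.gcd y2 (Nat.gcd y4 y5)) ≠ y4 := fun h => nd42 (h ▸ dT245_2)
  have nT2455 : (Nat.gcd y2 (Nat.gcd y4 y5)) ≠ y5 := fun h => nd52 (h ▸ dT245_2)
  have dT345_3 : (Nat.gcd y3 (Nat.gcd y4 y5)) ∣ y3 := Nat.gcd_dvd_left _ _
  have dT345_4 : (Nat.gcd y3 (Nat.gcd y4 y5)) ∣ y4 := (Nat.gcd_dvd_right _ _).trans (Nat.gcd_dvd_left _ _)
  have dT345_5 : (Nat.gcd y3 (Nat.gcd y4 y5)) ∣ y5 := (Nat.gcd_dvd_right _ _).trans (Nat.gcd_dvd_right _ _)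
  have mT345 : (Nat.gcd y3 (Nat.gcd y4 y5)) ∈ S := hg _ h3 _ (hg _ h4 _ h5)
  have nT345v : (Nat.gcd y3 (Nat.gcd y4 y5)) ≠ v := fun h => hne3 (Nat.dvd_antisymm hd3 (h ▸ dT345_3))
  have nT3451 : (Nat.gcd y3 (Nat.gcd y4 y5)) ≠ y1 := fun h => nd13 (h ▸ dT345_3)
  have nT3452 : (Nat.gcd y3 (Nat.gcd y4 y5)) ≠ y2 := fun h => nd23 (h ▸ dT345_3)
  have nT3453 : (Nat.gcd y3 (Nat.gcd y4 y5)) ≠ y3 := fun h => nd34 (h ▸ dT345_4)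
  have nT3454 : (Nat.gcd y3 (Nat.gcd y4 y5)) ≠ y4 := fun h => nd43 (h ▸ dT345_3)
  have nT3455 : (Nat.gcd y3 (Nat.gcd y4 y5)) ≠ y5 := fun h => nd53 (h ▸ dT345_3)
  have dQ1234_1 : (Nat.gcd y1 (Nat.gcd y2 (Nat.gcd y3 y4))) ∣ y1 := Nat.gcd_dvd_left _ _
  have dQ1234_2 : (Nat.gcd y1 (Nat.gcd y2 (Nat.gcd y3 y4))) ∣ y2 := (Nat.gcd_dvd_right _ _).trans (Nat.gcd_dvd_left _ _)
  have dQ1234_3 : (Nat.gcd y1 (Nat.gcd y2 (Nat.gcd y3 y4))) ∣ y3 := (Nat.gcd_dvd_right _ _).trans ((Nat.gcd_dvd_right _ _).trans (Nat.gcd_dvd_left _ _))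
  have dQ1234_4 : (Nat.gcd y1 (Nat.gcd y2 (Nat.gcd y3 y4))) ∣ y4 := (Nat.gcd_dvd_right _ _).trans ((Nat.gcd_dvd_right _ _).trans (Nat.gcd_dvd_right _ _))
  have mQ1234 : (Nat.gcd y1 (Nat.gcd y2 (Nat.gcd y3 y4))) ∈ S := hg _ h1 _ (hg _ h2 _ (hg _ h3 _ h4))
  have nQ1234v : (Nat.gcd y1 (Nat.gcd y2 (Nat.gcd y3 y4))) ≠ v := fun h => hne1 (Nat.dvd_antisymm hd1 (h ▸ dQ1234_1))
  have nQ12341 : (Nat.gcd y1 (Nat.gcd y2 (Nat.gcd y3 y4))) ≠ y1 := fun h => nd12 (h ▸ dQ1234_2)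
  have nQ12342 : (Nat.gcd y1 (Nat.gcd y2 (Nat.gcd y3 y4))) ≠ y2 := fun h => nd21 (h ▸ dQ1234_1)
  have nQ12343 : (Nat.gcd y1 (Nat.gcd y2 (Nat.gcd y3 y4))) ≠ y3 := fun h => nd31 (h ▸ dQ1234_1)
  have nQ12344 : (Nat.gcd y1 (Nat.gcd y2 (Nat.gcd y3 y4))) ≠ y4 := fun h => nd41 (h ▸ dQ1234_1)
  have nQ12345 : (Nat.gcd y1 (Nat.gcd y2 (Nat.gcd y3 y4))) ≠ y5 := fun h => nd51 (h ▸ dQ1234_1)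
  have dQ1235_1 : (Nat.gcd y1 (Nat.gcd y2 (Nat.gcd y3 y5))) ∣ y1 := Nat.gcd_dvd_left _ _
  have dQ1235_2 : (Nat.gcd y1 (Nat.gcd y2 (Nat.gcd y3 y5))) ∣ y2 := (Nat.gcd_dvd_right _ _).trans (Nat.gcd_dvd_left _ _)
  have dQ1235_3 : (Nat.gcd y1 (Nat.gcd y2 (Nat.gcd y3 y5))) ∣ y3 := (Nat.gcd_dvd_right _ _).trans ((Nat.gcd_dvd_right _ _).trans (Nat.gcd_dvd_left _ _))
  have dQ1235_5 : (Nat.gcd y1 (Nat.gcd y2 (Nat.gcd y3 y5))) ∣ y5 := (Nat.gcd_dvd_right _ _).trans ((Nat.gcd_dvd_right _ _).trans (Nat.gcd_dvd_right _ _))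
  have mQ1235 : (Nat.gcd y1 (Nat.gcd y2 (Nat.gcd y3 y5))) ∈ S := hg _ h1 _ (hg _ h2 _ (hg _ h3 _ h5))
  have nQ1235v : (Nat.gcd y1 (Nat.gcd y2 (Nat.gcd y3 y5))) ≠ v := fun h => hne1 (Nat.dvd_antisymm hd1 (h ▸ dQ1235_1))
  have nQ12351 : (Nat.gcd y1 (Nat.gcd y2 (Nat.gcd y3 y5))) ≠ y1 := fun h => nd12 (h ▸ dQ1235_2)
  have nQ12352 : (Nat.gcd y1 (Nat.gcd y2 (Nat.gcd y3 y5))) ≠ y2 := fun h => nd21 (h ▸ dQ1235_1)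
  have nQ12353 : (Nat.gcd y1 (Nat.gcd y2 (Nat.gcd y3 y5))) ≠ y3 := fun h => nd31 (h ▸ dQ1235_1)
  have nQ12354 : (Nat.gcd y1 (Nat.gcd y2 (Nat.gcd y3 y5))) ≠ y4 := fun h => nd41 (h ▸ dQ1235_1)
  have nQ12355 : (Nat.gcd y1 (Nat.gcd y2 (Nat.gcd y3 y5))) ≠ y5 := fun h => nd51 (h ▸ dQ1235_1)
  have dQ1245_1 : (Nat.gcd y1 (Nat.gcd y2 (Nat.gcd y4 y5))) ∣ y1 := Nat.gcd_dvd_left _ _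
  have dQ1245_2 : (Nat.gcd y1 (Nat.gcd y2 (Nat.gcd y4 y5))) ∣ y2 := (Nat.gcd_dvd_right _ _).trans (Nat.gcd_dvd_left _ _)
  have dQ1245_4 : (Nat.gcd y1 (Nat.gcd y2 (Nat.gcd y4 y5))) ∣ y4 := (Nat.gcd_dvd_right _ _).trans ((Nat.gcd_dvd_right _ _).trans (Nat.gcd_dvd_left _ _))
  have dQ1245_5 : (Nat.gcd y1 (Nat.gcd y2 (Nat.gcd y4 y5))) ∣ y5 := (Nat.gcd_dvd_right _ _).trans ((Nat.gcd_dvd_right _ _).trans (Nat.gcd_dvd_right _ _))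
  have mQ1245 : (Nat.gcd y1 (Nat.gcd y2 (Nat.gcd y4 y5))) ∈ S := hg _ h1 _ (hg _ h2 _ (hg _ h4 _ h5))
  have nQ1245v : (Nat.gcd y1 (Nat.gcd y2 (Nat.gcd y4 y5))) ≠ v := fun h => hne1 (Nat.dvd_antisymm hd1 (h ▸ dQ1245_1))
  have nQ12451 : (Nat.gcd y1 (Nat.gcd y2 (Nat.gcd y4 y5))) ≠ y1 := fun h => nd12 (h ▸ dQ1245_2)
  have nQ12452 : (Nat.gcd y1 (Nat.gcd y2 (Nat.gcd y4 y5))) ≠ y2 := fun h => nd21 (h ▸ dQ1245_1)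
  have nQ12453 : (Nat.gcd y1 (Nat.gcd y2 (Nat.gcd y4 y5))) ≠ y3 := fun h => nd31 (h ▸ dQ1245_1)
  have nQ12454 : (Nat.gcd y1 (Nat.gcd y2 (Nat.gcd y4 y5))) ≠ y4 := fun h => nd41 (h ▸ dQ1245_1)
  have nQ12455 : (Nat.gcd y1 (Nat.gcd y2 (Nat.gcd y4 y5))) ≠ y5 := fun h => nd51 (h ▸ dQ1245_1)
  have dQ1345_1 : (Nat.gcd y1 (Nat.gcd y3 (Nat.gcd y4 y5))) ∣ y1 := Nat.gcd_dvd_left _ _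
  have dQ1345_3 : (Nat.gcd y1 (Nat.gcd y3 (Nat.gcd y4 y5))) ∣ y3 := (Nat.gcd_dvd_right _ _).trans (Nat.gcd_dvd_left _ _)
  have dQ1345_4 : (Nat.gcd y1 (Nat.gcd y3 (Nat.gcd y4 y5))) ∣ y4 := (Nat.gcd_dvd_right _ _).trans ((Nat.gcd_dvd_right _ _).trans (Nat.gcd_dvd_left _ _))
  have dQ1345_5 : (Nat.gcd y1 (Nat.gcd y3 (Nat.gcd y4 y5))) ∣ y5 := (Nat.gcd_dvd_right _ _).trans ((Nat.gcd_dvd_right _ _).trans (Nat.gcd_dvd_right _ _))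
  have mQ1345 : (Nat.gcd y1 (Nat.gcd y3 (Nat.gcd y4 y5))) ∈ S := hg _ h1 _ (hg _ h3 _ (hg _ h4 _ h5))
  have nQ1345v : (Nat.gcd y1 (Nat.gcd y3 (Nat.gcd y4 y5))) ≠ v := fun h => hne1 (Nat.dvd_antisymm hd1 (h ▸ dQ1345_1))
  have nQ13451 : (Nat.gcd y1 (Nat.gcd y3 (Nat.gcd y4 y5))) ≠ y1 := fun h => nd13 (h ▸ dQ1345_3)
  have nQ13452 : (Nat.gcd y1 (Nat.gcd y3 (Nat.gcd y4 y5))) ≠ y2 := fun h => nd21 (h ▸ dQ1345_1)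
  have nQ13453 : (Nat.gcd y1 (Nat.gcd y3 (Nat.gcd y4 y5))) ≠ y3 := fun h => nd31 (h ▸ dQ1345_1)
  have nQ13454 : (Nat.gcd y1 (Nat.gcd y3 (Nat.gcd y4 y5))) ≠ y4 := fun h => nd41 (h ▸ dQ1345_1)
  have nQ13455 : (Nat.gcd y1 (Nat.gcd y3 (Nat.gcd y4 y5))) ≠ y5 := fun h => nd51 (h ▸ dQ1345_1)
  have dQ2345_2 : (Nat.gcd y2 (Nat.gcd y3 (Nat.gcd y4 y5))) ∣ y2 := Nat.gcd_dvd_left _ _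
  have dQ2345_3 : (Nat.gcd y2 (Nat.gcd y3 (Nat.gcd y4 y5))) ∣ y3 := (Nat.gcd_dvd_right _ _).trans (Nat.gcd_dvd_left _ _)
  have dQ2345_4 : (Nat.gcd y2 (Nat.gcd y3 (Nat.gcd y4 y5))) ∣ y4 := (Nat.gcd_dvd_right _ _).trans ((Nat.gcd_dvd_right _ _).trans (Nat.gcd_dvd_left _ _))
  have dQ2345_5 : (Nat.gcd y2 (Nat.gcd y3 (Nat.gcd y4 y5))) ∣ y5 := (Nat.gcd_dvd_right _ _).trans ((Nat.gcd_dvd_right _ _).trans (Nat.gcd_dvd_right _ _))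
  have mQ2345 : (Nat.gcd y2 (Nat.gcd y3 (Nat.gcd y4 y5))) ∈ S := hg _ h2 _ (hg _ h3 _ (hg _ h4 _ h5))
  have nQ2345v : (Nat.gcd y2 (Nat.gcd y3 (Nat.gcd y4 y5))) ≠ v := fun h => hne2 (Nat.dvd_antisymm hd2 (h ▸ dQ2345_2))
  have nQ23451 : (Nat.gcd y2 (Nat.gcd y3 (Nat.gcd y4 y5))) ≠ y1 := fun h => nd12 (h ▸ dQ2345_2)
  have nQ23452 : (Nat.gcd y2 (Nat.gcd y3 (Nat.gcd y4 y5))) ≠ y2 := fun h => nd23 (h ▸ dQ2345_3)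
  have nQ23453 : (Nat.gcd y2 (Nat.gcd y3 (Nat.gcd y4 y5))) ≠ y3 := fun h => nd32 (h ▸ dQ2345_2)
  have nQ23454 : (Nat.gcd y2 (Nat.gcd y3 (Nat.gcd y4 y5))) ≠ y4 := fun h => nd42 (h ▸ dQ2345_2)
  have nQ23455 : (Nat.gcd y2 (Nat.gcd y3 (Nat.gcd y4 y5))) ≠ y5 := fun h => nd52 (h ▸ dQ2345_2)
  have dZ12345_1 : (Nat.gcd y1 (Nat.gcd y2 (Nat.gcd y3 (Nat.gcd y4 y5)))) ∣ y1 := Nat.gcd_dvd_left _ _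
  have dZ12345_2 : (Nat.gcd y1 (Nat.gcd y2 (Nat.gcd y3 (Nat.gcd y4 y5)))) ∣ y2 := (Nat.gcd_dvd_right _ _).trans (Nat.gcd_dvd_left _ _)
  have dZ12345_3 : (Nat.gcd y1 (Nat.gcd y2 (Nat.gcd y3 (Nat.gcd y4 y5)))) ∣ y3 := (Nat.gcd_dvd_right _ _).trans ((Nat.gcd_dvd_right _ _).trans (Nat.gcd_dvd_left _ _))
  have dZ12345_4 : (Nat.gcd y1 (Nat.gcd y2 (Nat.gcd y3 (Nat.gcd y4 y5)))) ∣ y4 := (Nat.gcd_dvd_right _ _).trans ((Nat.gcd_dvd_right _ _).trans ((Nat.gcd_dvd_right _ _).trans (Nat.gcd_dvd_left _ _)))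
  have dZ12345_5 : (Nat.gcd y1 (Nat.gcd y2 (Nat.gcd y3 (Nat.gcd y4 y5)))) ∣ y5 := (Nat.gcd_dvd_right _ _).trans ((Nat.gcd_dvd_right _ _).trans ((Nat.gcd_dvd_right _ _).trans (Nat.gcd_dvd_right _ _)))
  have mZ12345 : (Nat.gcd y1 (Nat.gcd y2 (Nat.gcd y3 (Nat.gcd y4 y5)))) ∈ S := hg _ h1 _ (hg _ h2 _ (hg _ h3 _ (hg _ h4 _ h5)))
  have nZ12345v : (Nat.gcd y1 (Nat.gcd y2 (Nat.gcd y3 (Nat.gcd y4 y5)))) ≠ v := fun h => hne1 (Nat.dvd_antisymm hd1 (h ▸ dZ12345_1))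
  have nZ123451 : (Nat.gcd y1 (Nat.gcd y2 (Nat.gcd y3 (Nat.gcd y4 y5)))) ≠ y1 := fun h => nd12 (h ▸ dZ12345_2)
  have nZ123452 : (Nat.gcd y1 (Nat.gcd y2 (Nat.gcd y3 (Nat.gcd y4 y5)))) ≠ y2 := fun h => nd21 (h ▸ dZ12345_1)
  have nZ123453 : (Nat.gcd y1 (Nat.gcd y2 (Nat.gcd y3 (Nat.gcd y4 y5)))) ≠ y3 := fun h => nd31 (h ▸ dZ12345_1)
  have nZ123454 : (Nat.gcd y1 (Nat.gcd y2 (Nat.gcd y3 (Nat.gcd y4 y5)))) ≠ y4 := fun h => nd41 (h ▸ dZ12345_1)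
  have nZ123455 : (Nat.gcd y1 (Nat.gcd y2 (Nat.gcd y3 (Nat.gcd y4 y5)))) ≠ y5 := fun h => nd51 (h ▸ dZ12345_1)
  have alleq : ∀ X Y : ℕ, X ∈ S → X ≠ v → X ≠ y1 → X ≠ y2 → X ≠ y3 → X ≠ y4 → X ≠ y5 →
      Y ∈ S → Y ≠ v → Y ≠ y1 → Y ≠ y2 → Y ≠ y3 → Y ≠ y4 → Y ≠ y5 → X = Y := by
    intro X Y mX nXv nX1 nX2 nX3 nX4 nX5 mY nYv nY1 nY2 nY3 nY4 nY5
    by_contra hcon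
    exact card8 hcard hv h1 h2 h3 h4 h5 mX mY
      (fun h => hne1 h.symm) (fun h => hne2 h.symm) (fun h => hne3 h.symm) (fun h => hne4 h.symm) (fun h => hne5 h.symm)
      (fun h => nXv h.symm) (fun h => nYv h.symm)
      hy12 hy13 hy14 hy15 (fun h => nX1 h.symm) (fun h => nY1 h.symm)
      hy23 hy24 hy25 (fun h => nX2 h.symm) (fun h => nY2 h.symm)
      hy34 hy35 (fun h => nX3 h.symm) (fun h => nY3 h.symm)
      hy45 (fun h => nX4 h.symm) (fun h => nY4 h.symm)
      (fun h => nX5 h.symm) (fun h => nY5 h.symm)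
      hcon
  have eG13 : (Nat.gcd y1 y3) = (Nat.gcd y1 y2) := alleq (Nat.gcd y1 y3) (Nat.gcd y1 y2) mG13 nG13v nG131 nG132 nG133 nG134 nG135 mG12 nG12v nG121 nG122 nG123 nG124 nG125
  have eG14 : (Nat.gcd y1 y4) = (Nat.gcd y1 y2) := alleq (Nat.gcd y1 y4) (Nat.gcd y1 y2) mG14 nG14v nG141 nG142 nG143 nG144 nG145 mG12 nG12v nG121 nG122 nG123 nG124 nG125
  have eG15 : (Nat.gcd y1 y5) = (Nat.gcd y1 y2) := alleq (Nat.gcd y1 y5) (Nat.gcd y1 y2) mG15 nG15v nG151 nG152 nG153 nG154 nG155 mG12 nG12v nG121 nG122 nG123 nG124 nG125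
  have eG23 : (Nat.gcd y2 y3) = (Nat.gcd y1 y2) := alleq (Nat.gcd y2 y3) (Nat.gcd y1 y2) mG23 nG23v nG231 nG232 nG233 nG234 nG235 mG12 nG12v nG121 nG122 nG123 nG124 nG125
  have eG24 : (Nat.gcd y2 y4) = (Nat.gcd y1 y2) := alleq (Nat.gcd y2 y4) (Nat.gcd y1 y2) mG24 nG24v nG241 nG242 nG243 nG244 nG245 mG12 nG12v nG121 nG122 nG123 nG124 nG125
  have eG25 : (Nat.gcd y2 y5) = (Nat.gcd y1 y2) := alleq (Nat.gcd y2 y5) (Nat.gcd y1 y2) mG25 nG25v nG251 nG252 nG253 nG254 nG255 mG12 nG12v nG121 nG122 nG123 nG124 nG125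
  have eG34 : (Nat.gcd y3 y4) = (Nat.gcd y1 y2) := alleq (Nat.gcd y3 y4) (Nat.gcd y1 y2) mG34 nG34v nG341 nG342 nG343 nG344 nG345 mG12 nG12v nG121 nG122 nG123 nG124 nG125
  have eG35 : (Nat.gcd y3 y5) = (Nat.gcd y1 y2) := alleq (Nat.gcd y3 y5) (Nat.gcd y1 y2) mG35 nG35v nG351 nG352 nG353 nG354 nG355 mG12 nG12v nG121 nG122 nG123 nG124 nG125
  have eG45 : (Nat.gcd y4 y5) = (Nat.gcd y1 y2) := alleq (Nat.gcd y4 y5) (Nat.gcd y1 y2) mG45 nG45v nG451 nG452 nG453 nG454 nG455 mG12 nG12v nG121 nG122 nG123 nG124 nG125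
  have bdy1 : (Nat.gcd y1 y2) ∣ y1 := dG12_1
  have bdy2 : (Nat.gcd y1 y2) ∣ y2 := dG12_2
  have bdy3 : (Nat.gcd y1 y2) ∣ y3 := eG13 ▸ dG13_3
  have bdy4 : (Nat.gcd y1 y2) ∣ y4 := eG14 ▸ dG14_4
  have bdy5 : (Nat.gcd y1 y2) ∣ y5 := eG15 ▸ dG15_5
  have hpB : 0 < (Nat.gcd y1 y2) := Nat.gcd_pos_of_pos_left _ hp1
  have eT123 : (Nat.gcd y1 (Nat.gcd y2 y3)) = (Nat.gcd y1 y2) := Nat.dvd_antisymm (Nat.dvd_gcd dT123_1 dT123_2) (Nat.dvd_gcd bdy1 (Nat.dvd_gcd bdy2 (bdy3)))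
  have eT124 : (Nat.gcd y1 (Nat.gcd y2 y4)) = (Nat.gcd y1 y2) := Nat.dvd_antisymm (Nat.dvd_gcd dT124_1 dT124_2) (Nat.dvd_gcd bdy1 (Nat.dvd_gcd bdy2 (bdy4)))
  have eT125 : (Nat.gcd y1 (Nat.gcd y2 y5)) = (Nat.gcd y1 y2) := Nat.dvd_antisymm (Nat.dvd_gcd dT125_1 dT125_2) (Nat.dvd_gcd bdy1 (Nat.dvd_gcd bdy2 (bdy5)))
  have eT134 : (Nat.gcd y1 (Nat.gcd y3 y4)) = (Nat.gcd y1 y2) := Nat.dvd_antisymm (eG13 ▸ (Nat.dvd_gcd dT134_1 dT134_3)) (Nat.dvd_gcd bdy1 (Nat.dvd_gcd bdy3 (bdy4)))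
  have eT135 : (Nat.gcd y1 (Nat.gcd y3 y5)) = (Nat.gcd y1 y2) := Nat.dvd_antisymm (eG13 ▸ (Nat.dvd_gcd dT135_1 dT135_3)) (Nat.dvd_gcd bdy1 (Nat.dvd_gcd bdy3 (bdy5)))
  have eT145 : (Nat.gcd y1 (Nat.gcd y4 y5)) = (Nat.gcd y1 y2) := Nat.dvd_antisymm (eG14 ▸ (Nat.dvd_gcd dT145_1 dT145_4)) (Nat.dvd_gcd bdy1 (Nat.dvd_gcd bdy4 (bdy5)))
  have eT234 : (Nat.gcd y2 (Nat.gcd y3 y4)) = (Nat.gcd y1 y2) := Nat.dvd_antisymm (eG23 ▸ (Nat.dvd_gcd dT234_2 dT234_3)) (Nat.dvd_gcd bdy2 (Nat.dvd_gcd bdy3 (bdy4)))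
  have eT235 : (Nat.gcd y2 (Nat.gcd y3 y5)) = (Nat.gcd y1 y2) := Nat.dvd_antisymm (eG23 ▸ (Nat.dvd_gcd dT235_2 dT235_3)) (Nat.dvd_gcd bdy2 (Nat.dvd_gcd bdy3 (bdy5)))
  have eT245 : (Nat.gcd y2 (Nat.gcd y4 y5)) = (Nat.gcd y1 y2) := Nat.dvd_antisymm (eG24 ▸ (Nat.dvd_gcd dT245_2 dT245_4)) (Nat.dvd_gcd bdy2 (Nat.dvd_gcd bdy4 (bdy5)))
  have eT345 : (Nat.gcd y3 (Nat.gcd y4 y5)) = (Nat.gcd y1 y2) := Nat.dvd_antisymm (eG34 ▸ (Nat.dvd_gcd dT345_3 dT345_4)) (Nat.dvd_gcd bdy3 (Nat.dvd_gcd bdy4 (bdy5)))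
  have eQ1234 : (Nat.gcd y1 (Nat.gcd y2 (Nat.gcd y3 y4))) = (Nat.gcd y1 y2) := Nat.dvd_antisymm (Nat.dvd_gcd dQ1234_1 dQ1234_2) (Nat.dvd_gcd bdy1 (Nat.dvd_gcd bdy2 (Nat.dvd_gcd bdy3 (bdy4))))
  have eQ1235 : (Nat.gcd y1 (Nat.gcd y2 (Nat.gcd y3 y5))) = (Nat.gcd y1 y2) := Nat.dvd_antisymm (Nat.dvd_gcd dQ1235_1 dQ1235_2) (Nat.dvd_gcd bdy1 (Nat.dvd_gcd bdy2 (Nat.dvd_gcd bdy3 (bdy5))))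
  have eQ1245 : (Nat.gcd y1 (Nat.gcd y2 (Nat.gcd y4 y5))) = (Nat.gcd y1 y2) := Nat.dvd_antisymm (Nat.dvd_gcd dQ1245_1 dQ1245_2) (Nat.dvd_gcd bdy1 (Nat.dvd_gcd bdy2 (Nat.dvd_gcd bdy4 (bdy5))))
  have eQ1345 : (Nat.gcd y1 (Nat.gcd y3 (Nat.gcd y4 y5))) = (Nat.gcd y1 y2) := Nat.dvd_antisymm (eG13 ▸ (Nat.dvd_gcd dQ1345_1 dQ1345_3)) (Nat.dvd_gcd bdy1 (Nat.dvd_gcd bdy3 (Nat.dvd_gcd bdy4 (bdy5))))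
  have eQ2345 : (Nat.gcd y2 (Nat.gcd y3 (Nat.gcd y4 y5))) = (Nat.gcd y1 y2) := Nat.dvd_antisymm (eG23 ▸ (Nat.dvd_gcd dQ2345_2 dQ2345_3)) (Nat.dvd_gcd bdy2 (Nat.dvd_gcd bdy3 (Nat.dvd_gcd bdy4 (bdy5))))
  have eZ12345 : (Nat.gcd y1 (Nat.gcd y2 (Nat.gcd y3 (Nat.gcd y4 y5)))) = (Nat.gcd y1 y2) := Nat.dvd_antisymm (Nat.dvd_gcd dZ12345_1 dZ12345_2) (Nat.dvd_gcd bdy1 (Nat.dvd_gcd bdy2 (Nat.dvd_gcd bdy3 (Nat.dvd_gcd bdy4 (bdy5)))))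
  have qcast : ∀ q r : ℕ, q = r → (1:ℚ)/(q:ℚ) = 1/(r:ℚ) := by rintro q r rfl; rfl
  have cG13 := qcast _ _ eG13
  have cG14 := qcast _ _ eG14
  have cG15 := qcast _ _ eG15
  have cG23 := qcast _ _ eG23
  have cG24 := qcast _ _ eG24
  have cG25 := qcast _ _ eG25
  have cG34 := qcast _ _ eG34
  have cG35 := qcast _ _ eG35
  have cG45 := qcast _ _ eG45
  have cT123 := qcast _ _ eT123
  have cT124 := qcast _ _ eT124
  have cT125 := qcast _ _ eT125
  have cT134 := qcast _ _ eT134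
  have cT135 := qcast _ _ eT135
  have cT145 := qcast _ _ eT145
  have cT234 := qcast _ _ eT234
  have cT235 := qcast _ _ eT235
  have cT245 := qcast _ _ eT245
  have cT345 := qcast _ _ eT345
  have cQ1234 := qcast _ _ eQ1234
  have cQ1235 := qcast _ _ eQ1235
  have cQ1245 := qcast _ _ eQ1245
  have cQ1345 := qcast _ _ eQ1345
  have cQ2345 := qcast _ _ eQ2345
  have cZ12345 := qcast _ _ eZ12345
  have rB1 := recip_le hpB bdy1 nG121
  have rB2 := recip_le hpB bdy2 nG122
  have rB3 := recip_le hpB bdy3 nG123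
  have rB4 := recip_le hpB bdy4 nG124
  have rB5 := recip_le hpB bdy5 nG125
  have pv := recip_pos hvpos
  have p1 := recip_pos hp1
  have p2 := recip_pos hp2
  have p3 := recip_pos hp3
  have p4 := recip_pos hp4
  have p5 := recip_pos hp5
  refine ne_of_gt ?_
  linarith

lemma alpha_ne (S : Finset ℕ) (h0 : 0 ∉ S) (hg : ∀ a ∈ S, ∀ b ∈ S, Nat.gcd a b ∈ S)
    (hcard : S.card ≤ 7) {v : ℕ} (hv : v ∈ S) : al S v ≠ 0 := by
  have hvpos : 0 < v := Nat.pos_of_ne_zero (by rintro rfl; exact h0 hv)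
  set M := Mset S v with hMdef
  have hMsub : M ⊆ S := Finset.filter_subset _ _
  have hvM : v ∉ M := fun h => (Mset_facts S v h).2.2.1 rfl
  -- card bound
  have hm5 : M.card ≤ 5 := by
    by_cases hm2 : 2 ≤ M.card
    · obtain ⟨y1, hy1, y2, hy2, hne⟩ := Finset.one_lt_card.mp hm2
      obtain ⟨hy1S, hy1d, hy1v, -⟩ := Mset_facts S v hy1
      obtain ⟨hy2S, hy2d, hy2v, -⟩ := Mset_facts S v hy2
      set g := Nat.gcd y1 y2 with hgdef
      have hgS : g ∈ S := hg _ hy1S _ hy2S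
      have hgy1 : g ∣ y1 := Nat.gcd_dvd_left _ _
      have hgy2 : g ∣ y2 := Nat.gcd_dvd_right _ _
      have hgny1 : g ≠ y1 := fun h => (Mset_incomp S v hy1 hy2 hne) (h ▸ hgy2)
      have hgM : g ∉ M := fun h => (Mset_incomp S v h hy1 hgny1) hgy1
      have hgv : g ≠ v := fun h => hy1v (Nat.dvd_antisymm hy1d (h ▸ hgy1))
      have hsub : insert v (insert g M) ⊆ S := by
        intro t ht
        rcases Finset.mem_insert.mp ht with rfl | ht
        · exact hv
        · rcases Finset.mem_insert.mp ht with rfl | ht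
          · exact hgS
          · exact hMsub ht
      have hcard2 : (insert v (insert g M)).card = M.card + 2 := by
        rw [Finset.card_insert_of_notMem (by simp [hvM, Ne.symm hgv]),
          Finset.card_insert_of_notMem hgM]
      have := Finset.card_le_card hsub
      omega
    · omega
  have hexp := al_eq_ie S h0 hg hv
  rw [← hMdef] at hexp
  rcases show M.card = 0 ∨ M.card = 1 ∨ M.card = 2 ∨ M.card = 3 ∨ M.card = 4 ∨ M.card = 5 by omega
    with hc | hc | hc | hc | hc | hc
  · -- m = 0
    rw [Finset.card_eq_zero.mp hc] at hexp
    simp only [Finset.powerset_empty, Finset.sum_singleton, Finset.card_empty, pow_zero,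
      Finset.gcd_empty, Nat.gcd_zero_right, one_mul] at hexp
    rw [hexp]
    exact ne_of_gt (recip_pos hvpos)
  · -- m = 1
    obtain ⟨y1, hM⟩ := Finset.card_eq_one.mp hc
    have hy1 : y1 ∈ M := by rw [hM]; exact Finset.mem_singleton_self _
    obtain ⟨hy1S, hy1d, hy1v, -⟩ := Mset_facts S v hy1
    have hp1 : 0 < y1 := Nat.pos_of_ne_zero (by rintro rfl; exact h0 hy1S)
    rw [hM, expand1] at hexp
    simp only [Finset.card_empty, Finset.card_singleton, Finset.gcd_empty, Finset.gcd_singleton,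
      id_eq, normalize_eq, Nat.gcd_zero_right, pow_zero, pow_one, one_mul, neg_one_mul,
      Nat.gcd_eq_right hy1d] at hexp
    rw [hexp]
    have := recip_le hp1 hy1d hy1v
    have := recip_pos hvpos
    have := recip_pos hp1
    intro hcon
    linarith [hcon.ge, hcon.le]
  · -- m = 2
    obtain ⟨y1, y2, hne, hM⟩ := Finset.card_eq_two.mp hc
    have hy1 : y1 ∈ M := by rw [hM]; simp
    have hy2 : y2 ∈ M := by rw [hM]; simp
    obtain ⟨hy1S, hy1d, hy1v, -⟩ := Mset_facts S v hy1
    obtain ⟨hy2S, hy2d, hy2v, -⟩ := Mset_facts S v hy2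
    have hp1 : 0 < y1 := Nat.pos_of_ne_zero (by rintro rfl; exact h0 hy1S)
    have hp2 : 0 < y2 := Nat.pos_of_ne_zero (by rintro rfl; exact h0 hy2S)
    have nd12 : ¬ y1 ∣ y2 := Mset_incomp S v hy1 hy2 hne
    have nd21 : ¬ y2 ∣ y1 := Mset_incomp S v hy2 hy1 hne.symm
    set g := Nat.gcd y1 y2 with hgdef
    have hpg : 0 < g := Nat.gcd_pos_of_pos_left _ hp1
    have hga : g ∣ y1 := Nat.gcd_dvd_left _ _
    have hgb : g ∣ y2 := Nat.gcd_dvd_right _ _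
    have hgny1 : g ≠ y1 := fun h => nd12 (h ▸ hgb)
    have hgny2 : g ≠ y2 := fun h => nd21 (h ▸ hga)
    have hgdv : g ∣ v := hga.trans hy1d
    rw [hM, expand2 _ _ _ hne] at hexp
    simp only [Finset.card_empty, Finset.card_singleton, Finset.gcd_empty, Finset.gcd_insert,
      Finset.gcd_singleton, id_eq, normalize_eq, gcd_eq_nat_gcd, Nat.gcd_zero_right,
      Finset.card_insert_of_notMem (Finset.notMem_singleton.mpr hne),
      pow_zero, pow_one, one_mul, neg_one_mul,
      Nat.gcd_eq_right hy1d, Nat.gcd_eq_right hy2d, Nat.gcd_eq_right hgdv] at hexp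
    have epow : ((-1:ℚ))^(1+1) = 1 := by norm_num
    rw [epow, one_mul] at hexp
    rw [← hgdef, Nat.gcd_eq_right hgdv] at hexp
    rw [hexp]
    refine ne_of_gt ?_
    have r1 := recip_le hpg hga hgny1
    have r2 := recip_le hpg hgb hgny2
    have := recip_pos hvpos
    have := recip_pos hp1
    have := recip_pos hp2
    have := recip_pos hpg
    linarith
  · -- m = 3
    obtain ⟨y1, y2, y3, h12, h13, h23, hM⟩ := Finset.card_eq_three.mp hc
    have hy1 : y1 ∈ M := by rw [hM]; simp
    have hy2 : y2 ∈ M := by rw [hM]; simp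
    have hy3 : y3 ∈ M := by rw [hM]; simp
    obtain ⟨hy1S, hy1d, hy1v, -⟩ := Mset_facts S v hy1
    obtain ⟨hy2S, hy2d, hy2v, -⟩ := Mset_facts S v hy2
    obtain ⟨hy3S, hy3d, hy3v, -⟩ := Mset_facts S v hy3
    have nd12 : ¬ y1 ∣ y2 := Mset_incomp S v hy1 hy2 h12
    have nd21 : ¬ y2 ∣ y1 := Mset_incomp S v hy2 hy1 h12.symm
    have nd13 : ¬ y1 ∣ y3 := Mset_incomp S v hy1 hy3 h13
    have nd31 : ¬ y3 ∣ y1 := Mset_incomp S v hy3 hy1 h13.symm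
    have nd23 : ¬ y2 ∣ y3 := Mset_incomp S v hy2 hy3 h23
    have nd32 : ¬ y3 ∣ y2 := Mset_incomp S v hy3 hy2 h23.symm
    have hd12v : Nat.gcd y1 y2 ∣ v := (Nat.gcd_dvd_left _ _).trans hy1d
    have hd13v : Nat.gcd y1 y3 ∣ v := (Nat.gcd_dvd_left _ _).trans hy1d
    have hd23v : Nat.gcd y2 y3 ∣ v := (Nat.gcd_dvd_left _ _).trans hy2d
    have hd123v : Nat.gcd y1 (Nat.gcd y2 y3) ∣ v := (Nat.gcd_dvd_left _ _).trans hy1d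
    rw [hM, expand3 _ _ _ _ h12 h13 h23] at hexp
    simp only [Finset.card_empty, Finset.card_singleton, Finset.gcd_empty, Finset.gcd_insert,
      Finset.gcd_singleton, id_eq, normalize_eq, gcd_eq_nat_gcd, Nat.gcd_zero_right,
      Finset.card_insert_of_notMem, Finset.mem_insert, Finset.mem_singleton, h12, h13, h23,
      not_false_iff, or_false, false_or,
      pow_zero, pow_one, one_mul, neg_one_mul,
      Nat.gcd_eq_right hy1d, Nat.gcd_eq_right hy2d, Nat.gcd_eq_right hy3d,
      Nat.gcd_eq_right hd12v, Nat.gcd_eq_right hd13v, Nat.gcd_eq_right hd23v,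
      Nat.gcd_eq_right hd123v] at hexp
    have hkey := case3 S h0 hg hcard v y1 y2 y3 hv hy1S hy2S hy3S hy1d hy2d hy3d
      hy1v hy2v hy3v nd12 nd21 nd13 nd31 nd23 nd32
    intro hcon
    apply hkey
    rw [← hcon, hexp]
    norm_num
    ring
  · -- m = 4
    obtain ⟨y1, t3, hy1t, hins, ht3⟩ := Finset.card_eq_succ.mp hc
    obtain ⟨y2, y3, y4, h23, h24, h34, ht⟩ := Finset.card_eq_three.mp ht3
    subst ht
    have h12 : y1 ≠ y2 := by rintro rfl; simp at hy1t
    have h13 : y1 ≠ y3 := by rintro rfl; simp at hy1t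
    have h14 : y1 ≠ y4 := by rintro rfl; simp at hy1t
    have hM : M = {y1, y2, y3, y4} := by rw [← hins]
    have hy1 : y1 ∈ M := by rw [hM]; simp
    have hy2 : y2 ∈ M := by rw [hM]; simp
    have hy3 : y3 ∈ M := by rw [hM]; simp
    have hy4 : y4 ∈ M := by rw [hM]; simp
    obtain ⟨hy1S, hy1d, hy1v, -⟩ := Mset_facts S v hy1
    obtain ⟨hy2S, hy2d, hy2v, -⟩ := Mset_facts S v hy2
    obtain ⟨hy3S, hy3d, hy3v, -⟩ := Mset_facts S v hy3
    obtain ⟨hy4S, hy4d, hy4v, -⟩ := Mset_facts S v hy4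
    have nd12 : ¬ y1 ∣ y2 := Mset_incomp S v hy1 hy2 h12
    have nd21 : ¬ y2 ∣ y1 := Mset_incomp S v hy2 hy1 h12.symm
    have nd13 : ¬ y1 ∣ y3 := Mset_incomp S v hy1 hy3 h13
    have nd31 : ¬ y3 ∣ y1 := Mset_incomp S v hy3 hy1 h13.symm
    have nd14 : ¬ y1 ∣ y4 := Mset_incomp S v hy1 hy4 h14
    have nd41 : ¬ y4 ∣ y1 := Mset_incomp S v hy4 hy1 h14.symm
    have nd23 : ¬ y2 ∣ y3 := Mset_incomp S v hy2 hy3 h23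
    have nd32 : ¬ y3 ∣ y2 := Mset_incomp S v hy3 hy2 h23.symm
    have nd24 : ¬ y2 ∣ y4 := Mset_incomp S v hy2 hy4 h24
    have nd42 : ¬ y4 ∣ y2 := Mset_incomp S v hy4 hy2 h24.symm
    have nd34 : ¬ y3 ∣ y4 := Mset_incomp S v hy3 hy4 h34
    have nd43 : ¬ y4 ∣ y3 := Mset_incomp S v hy4 hy3 h34.symm
    have hdv12 : Nat.gcd y1 y2 ∣ v := (Nat.gcd_dvd_left _ _).trans hy1d
    have hdv13 : Nat.gcd y1 y3 ∣ v := (Nat.gcd_dvd_left _ _).trans hy1d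
    have hdv14 : Nat.gcd y1 y4 ∣ v := (Nat.gcd_dvd_left _ _).trans hy1d
    have hdv23 : Nat.gcd y2 y3 ∣ v := (Nat.gcd_dvd_left _ _).trans hy2d
    have hdv24 : Nat.gcd y2 y4 ∣ v := (Nat.gcd_dvd_left _ _).trans hy2d
    have hdv34 : Nat.gcd y3 y4 ∣ v := (Nat.gcd_dvd_left _ _).trans hy3d
    have hdv123 : Nat.gcd y1 (Nat.gcd y2 y3) ∣ v := (Nat.gcd_dvd_left _ _).trans hy1d
    have hdv124 : Nat.gcd y1 (Nat.gcd y2 y4) ∣ v := (Nat.gcd_dvd_left _ _).trans hy1d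
    have hdv134 : Nat.gcd y1 (Nat.gcd y3 y4) ∣ v := (Nat.gcd_dvd_left _ _).trans hy1d
    have hdv234 : Nat.gcd y2 (Nat.gcd y3 y4) ∣ v := (Nat.gcd_dvd_left _ _).trans hy2d
    have hdv1234 : Nat.gcd y1 (Nat.gcd y2 (Nat.gcd y3 y4)) ∣ v := (Nat.gcd_dvd_left _ _).trans hy1d
    rw [hM, expand4 _ _ _ _ _ h12 h13 h14 h23 h24 h34] at hexp
    simp only [Finset.card_empty, Finset.card_singleton, Finset.gcd_empty, Finset.gcd_insert,
      Finset.gcd_singleton, id_eq, normalize_eq, gcd_eq_nat_gcd, Nat.gcd_zero_right,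
      Finset.card_insert_of_notMem, Finset.mem_insert, Finset.mem_singleton, h12, h13, h14, h23, h24, h34,
      not_false_iff, or_false, false_or,
      pow_zero, pow_one, one_mul, neg_one_mul,
      Nat.gcd_eq_right hy1d, Nat.gcd_eq_right hy2d, Nat.gcd_eq_right hy3d, Nat.gcd_eq_right hy4d,
      Nat.gcd_eq_right hdv12, Nat.gcd_eq_right hdv13, Nat.gcd_eq_right hdv14, Nat.gcd_eq_right hdv23, Nat.gcd_eq_right hdv24, Nat.gcd_eq_right hdv34, Nat.gcd_eq_right hdv123, Nat.gcd_eq_right hdv124, Nat.gcd_eq_right hdv134, Nat.gcd_eq_right hdv234, Nat.gcd_eq_right hdv1234] at hexp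
    have hkey := case4 S h0 hg hcard v y1 y2 y3 y4 hv hy1S hy2S hy3S hy4S hy1d hy2d hy3d hy4d hy1v hy2v hy3v hy4v nd12 nd13 nd14 nd21 nd23 nd24 nd31 nd32 nd34 nd41 nd42 nd43
    intro hcon
    apply hkey
    rw [← hcon, hexp]
    norm_num
    ring
  · -- m = 5
    obtain ⟨y1, t4, hy1t, hins, ht4⟩ := Finset.card_eq_succ.mp hc
    obtain ⟨y2, t3, hy2t, hins2, ht3⟩ := Finset.card_eq_succ.mp ht4
    obtain ⟨y3, y4, y5, h34, h35, h45, ht⟩ := Finset.card_eq_three.mp ht3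
    subst ht
    subst hins2
    have h23 : y2 ≠ y3 := by rintro rfl; simp at hy2t
    have h24 : y2 ≠ y4 := by rintro rfl; simp at hy2t
    have h25 : y2 ≠ y5 := by rintro rfl; simp at hy2t
    have h12 : y1 ≠ y2 := by rintro rfl; simp at hy1t
    have h13 : y1 ≠ y3 := by rintro rfl; simp at hy1t
    have h14 : y1 ≠ y4 := by rintro rfl; simp at hy1t
    have h15 : y1 ≠ y5 := by rintro rfl; simp at hy1t
    have hM : M = {y1, y2, y3, y4, y5} := by rw [← hins]
    have hy1 : y1 ∈ M := by rw [hM]; simp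
    have hy2 : y2 ∈ M := by rw [hM]; simp
    have hy3 : y3 ∈ M := by rw [hM]; simp
    have hy4 : y4 ∈ M := by rw [hM]; simp
    have hy5 : y5 ∈ M := by rw [hM]; simp
    obtain ⟨hy1S, hy1d, hy1v, -⟩ := Mset_facts S v hy1
    obtain ⟨hy2S, hy2d, hy2v, -⟩ := Mset_facts S v hy2
    obtain ⟨hy3S, hy3d, hy3v, -⟩ := Mset_facts S v hy3
    obtain ⟨hy4S, hy4d, hy4v, -⟩ := Mset_facts S v hy4
    obtain ⟨hy5S, hy5d, hy5v, -⟩ := Mset_facts S v hy5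
    have nd12 : ¬ y1 ∣ y2 := Mset_incomp S v hy1 hy2 h12
    have nd21 : ¬ y2 ∣ y1 := Mset_incomp S v hy2 hy1 h12.symm
    have nd13 : ¬ y1 ∣ y3 := Mset_incomp S v hy1 hy3 h13
    have nd31 : ¬ y3 ∣ y1 := Mset_incomp S v hy3 hy1 h13.symm
    have nd14 : ¬ y1 ∣ y4 := Mset_incomp S v hy1 hy4 h14
    have nd41 : ¬ y4 ∣ y1 := Mset_incomp S v hy4 hy1 h14.symm
    have nd15 : ¬ y1 ∣ y5 := Mset_incomp S v hy1 hy5 h15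
    have nd51 : ¬ y5 ∣ y1 := Mset_incomp S v hy5 hy1 h15.symm
    have nd23 : ¬ y2 ∣ y3 := Mset_incomp S v hy2 hy3 h23
    have nd32 : ¬ y3 ∣ y2 := Mset_incomp S v hy3 hy2 h23.symm
    have nd24 : ¬ y2 ∣ y4 := Mset_incomp S v hy2 hy4 h24
    have nd42 : ¬ y4 ∣ y2 := Mset_incomp S v hy4 hy2 h24.symm
    have nd25 : ¬ y2 ∣ y5 := Mset_incomp S v hy2 hy5 h25
    have nd52 : ¬ y5 ∣ y2 := Mset_incomp S v hy5 hy2 h25.symm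
    have nd34 : ¬ y3 ∣ y4 := Mset_incomp S v hy3 hy4 h34
    have nd43 : ¬ y4 ∣ y3 := Mset_incomp S v hy4 hy3 h34.symm
    have nd35 : ¬ y3 ∣ y5 := Mset_incomp S v hy3 hy5 h35
    have nd53 : ¬ y5 ∣ y3 := Mset_incomp S v hy5 hy3 h35.symm
    have nd45 : ¬ y4 ∣ y5 := Mset_incomp S v hy4 hy5 h45
    have nd54 : ¬ y5 ∣ y4 := Mset_incomp S v hy5 hy4 h45.symm
    have hdv12 : Nat.gcd y1 y2 ∣ v := (Nat.gcd_dvd_left _ _).trans hy1d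
    have hdv13 : Nat.gcd y1 y3 ∣ v := (Nat.gcd_dvd_left _ _).trans hy1d
    have hdv14 : Nat.gcd y1 y4 ∣ v := (Nat.gcd_dvd_left _ _).trans hy1d
    have hdv15 : Nat.gcd y1 y5 ∣ v := (Nat.gcd_dvd_left _ _).trans hy1d
    have hdv23 : Nat.gcd y2 y3 ∣ v := (Nat.gcd_dvd_left _ _).trans hy2d
    have hdv24 : Nat.gcd y2 y4 ∣ v := (Nat.gcd_dvd_left _ _).trans hy2d
    have hdv25 : Nat.gcd y2 y5 ∣ v := (Nat.gcd_dvd_left _ _).trans hy2d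
    have hdv34 : Nat.gcd y3 y4 ∣ v := (Nat.gcd_dvd_left _ _).trans hy3d
    have hdv35 : Nat.gcd y3 y5 ∣ v := (Nat.gcd_dvd_left _ _).trans hy3d
    have hdv45 : Nat.gcd y4 y5 ∣ v := (Nat.gcd_dvd_left _ _).trans hy4d
    have hdv123 : Nat.gcd y1 (Nat.gcd y2 y3) ∣ v := (Nat.gcd_dvd_left _ _).trans hy1d
    have hdv124 : Nat.gcd y1 (Nat.gcd y2 y4) ∣ v := (Nat.gcd_dvd_left _ _).trans hy1d
    have hdv125 : Nat.gcd y1 (Nat.gcd y2 y5) ∣ v := (Nat.gcd_dvd_left _ _).trans hy1d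
    have hdv134 : Nat.gcd y1 (Nat.gcd y3 y4) ∣ v := (Nat.gcd_dvd_left _ _).trans hy1d
    have hdv135 : Nat.gcd y1 (Nat.gcd y3 y5) ∣ v := (Nat.gcd_dvd_left _ _).trans hy1d
    have hdv145 : Nat.gcd y1 (Nat.gcd y4 y5) ∣ v := (Nat.gcd_dvd_left _ _).trans hy1d
    have hdv234 : Nat.gcd y2 (Nat.gcd y3 y4) ∣ v := (Nat.gcd_dvd_left _ _).trans hy2d
    have hdv235 : Nat.gcd y2 (Nat.gcd y3 y5) ∣ v := (Nat.gcd_dvd_left _ _).trans hy2d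
    have hdv245 : Nat.gcd y2 (Nat.gcd y4 y5) ∣ v := (Nat.gcd_dvd_left _ _).trans hy2d
    have hdv345 : Nat.gcd y3 (Nat.gcd y4 y5) ∣ v := (Nat.gcd_dvd_left _ _).trans hy3d
    have hdv1234 : Nat.gcd y1 (Nat.gcd y2 (Nat.gcd y3 y4)) ∣ v := (Nat.gcd_dvd_left _ _).trans hy1d
    have hdv1235 : Nat.gcd y1 (Nat.gcd y2 (Nat.gcd y3 y5)) ∣ v := (Nat.gcd_dvd_left _ _).trans hy1d
    have hdv1245 : Nat.gcd y1 (Nat.gcd y2 (Nat.gcd y4 y5)) ∣ v := (Nat.gcd_dvd_left _ _).trans hy1d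
    have hdv1345 : Nat.gcd y1 (Nat.gcd y3 (Nat.gcd y4 y5)) ∣ v := (Nat.gcd_dvd_left _ _).trans hy1d
    have hdv2345 : Nat.gcd y2 (Nat.gcd y3 (Nat.gcd y4 y5)) ∣ v := (Nat.gcd_dvd_left _ _).trans hy2d
    have hdv12345 : Nat.gcd y1 (Nat.gcd y2 (Nat.gcd y3 (Nat.gcd y4 y5))) ∣ v := (Nat.gcd_dvd_left _ _).trans hy1d
    rw [hM, expand5 _ _ _ _ _ _ h12 h13 h14 h15 h23 h24 h25 h34 h35 h45] at hexp
    simp only [Finset.card_empty, Finset.card_singleton, Finset.gcd_empty, Finset.gcd_insert,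
      Finset.gcd_singleton, id_eq, normalize_eq, gcd_eq_nat_gcd, Nat.gcd_zero_right,
      Finset.card_insert_of_notMem, Finset.mem_insert, Finset.mem_singleton, h12, h13, h14, h15, h23, h24, h25, h34, h35, h45,
      not_false_iff, or_false, false_or,
      pow_zero, pow_one, one_mul, neg_one_mul,
      Nat.gcd_eq_right hy1d, Nat.gcd_eq_right hy2d, Nat.gcd_eq_right hy3d, Nat.gcd_eq_right hy4d, Nat.gcd_eq_right hy5d,
      Nat.gcd_eq_right hdv12, Nat.gcd_eq_right hdv13, Nat.gcd_eq_right hdv14, Nat.gcd_eq_right hdv15, Nat.gcd_eq_right hdv23, Nat.gcd_eq_right hdv24, Nat.gcd_eq_right hdv25, Nat.gcd_eq_right hdv34, Nat.gcd_eq_right hdv35, Nat.gcd_eq_right hdv45, Nat.gcd_eq_right hdv123, Nat.gcd_eq_right hdv124, Nat.gcd_eq_right hdv125, Nat.gcd_eq_right hdv134, Nat.gcd_eq_right hdv135, Nat.gcd_eq_right hdv145, Nat.gcd_eq_right hdv234, Nat.gcd_eq_right hdv235, Nat.gcd_eq_right hdv245, Nat.gcd_eq_right hdv345, Nat.gcd_eq_right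 hdv1234, Nat.gcd_eq_right hdv1235, Nat.gcd_eq_right hdv1245, Nat.gcd_eq_right hdv1345, Nat.gcd_eq_right hdv2345, Nat.gcd_eq_right hdv12345] at hexp
    have hkey := case5 S h0 hg hcard v y1 y2 y3 y4 y5 hv hy1S hy2S hy3S hy4S hy5S hy1d hy2d hy3d hy4d hy5d hy1v hy2v hy3v hy4v hy5v nd12 nd13 nd14 nd15 nd21 nd23 nd24 nd25 nd31 nd32 nd34 nd35 nd41 nd42 nd43 nd45 nd51 nd52 nd53 nd54
    intro hcon
    apply hkey
    rw [← hcon, hexp]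
    norm_num
    ring

theorem stmt10 (S : Finset ℕ) (h0 : 0 ∉ S)
    (hg : ∀ a ∈ S, ∀ b ∈ S, Nat.gcd a b ∈ S)
    (hcard : S.card ≤ 7) :
    (Matrix.of fun a b : {x // x ∈ S} => (Nat.lcm a.1 b.1 : ℚ)).det ≠ 0 := by
  set n := S.card with hn
  set σ : Fin n ≃o {x // x ∈ S} := S.orderIsoOfFin rfl with hσ
  set x : Fin n → ℕ := fun i => (σ i : ℕ) with hx
  have hxS : ∀ i, x i ∈ S := fun i => (σ i).2
  have hxpos : ∀ i, 0 < x i := fun i => Nat.pos_of_ne_zero (by intro h; exact h0 (h ▸ hxS i))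
  have hxmono : StrictMono x := fun i j hij => by
    have := σ.strictMono hij
    exact this
  -- matrices
  set C : Matrix (Fin n) (Fin n) ℚ := Matrix.of fun i j => 1/((Nat.gcd (x i) (x j) : ℕ) : ℚ) with hC
  set E : Matrix (Fin n) (Fin n) ℚ := Matrix.of fun i j => if x j ∣ x i then 1 else 0 with hE
  set D : Matrix (Fin n) (Fin n) ℚ := Matrix.diagonal (fun i => ((x i : ℕ) : ℚ)) with hD
  set Δ : Matrix (Fin n) (Fin n) ℚ := Matrix.diagonal (fun i => al S (x i)) with hΔ
  have sumS : ∀ h : ℕ → ℚ, ∑ u ∈ S, h u = ∑ k : Fin n, h (x k) := by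
    intro h
    rw [← Finset.sum_coe_sort S h]
    exact (Equiv.sum_comp σ.toEquiv (fun u => h u.1)).symm
  -- C = E * Δ * Eᵀ
  have hCfact : C = E * Δ * E.transpose := by
    ext i j
    have hgmem : Nat.gcd (x i) (x j) ∈ S := hg _ (hxS i) _ (hxS j)
    have entry : (E * Δ * E.transpose) i j
        = ∑ k : Fin n, (if x k ∣ x i then (1:ℚ) else 0) * al S (x k) * (if x k ∣ x j then 1 else 0) := by
      rw [Matrix.mul_apply]
      refine Finset.sum_congr rfl (fun k _ => ?_)
      rw [Matrix.mul_diagonal]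
      simp [hE, Matrix.transpose_apply, mul_comm, mul_assoc, mul_left_comm]
    rw [entry]
    have : ∀ k : Fin n, (if x k ∣ x i then (1:ℚ) else 0) * al S (x k) * (if x k ∣ x j then 1 else 0)
        = if x k ∣ Nat.gcd (x i) (x j) then al S (x k) else 0 := by
      intro k
      by_cases h1 : x k ∣ x i <;> by_cases h2 : x k ∣ x j <;>
        simp [h1, h2, Nat.dvd_gcd_iff]
    rw [Finset.sum_congr rfl (fun k _ => this k)]
    have := al_system S h0 hgmem
    rw [Finset.sum_filter] at this
    rw [← sumS (fun u => if u ∣ Nat.gcd (x i) (x j) then al S u else 0), this]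
    simp [hC]
  -- lcm matrix = D * C * D  (after reindexing)
  have hL : (Matrix.of fun a b : {x // x ∈ S} => (Nat.lcm a.1 b.1 : ℚ)).det
      = (D * C * D).det := by
    rw [← Matrix.det_submatrix_equiv_self σ.toEquiv]
    congr 1
    ext i j
    have hdvd : Nat.gcd (x i) (x j) ∣ x i * x j := (Nat.gcd_dvd_left _ _).mul_right _
    have hgpos : (0:ℚ) < (Nat.gcd (x i) (x j) : ℚ) := by
      exact_mod_cast Nat.gcd_pos_of_pos_left (x j) (hxpos i)
    have hlcm : ((Nat.lcm (x i) (x j) : ℕ) : ℚ) = (x i : ℚ) * (x j : ℚ) / (Nat.gcd (x i) (x j) : ℚ) := by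
      rw [Nat.lcm]
      rw [Nat.cast_div hdvd (by exact_mod_cast hgpos.ne')]
      push_cast
      ring
    simp only [Matrix.submatrix_apply, Matrix.of_apply]
    show ((Nat.lcm (x i) (x j) : ℕ) : ℚ) = (D * C * D) i j
    rw [hlcm]
    have : (D * C * D) i j = (x i : ℚ) * (1/((Nat.gcd (x i) (x j) : ℕ) : ℚ)) * (x j : ℚ) := by
      rw [hD, Matrix.mul_diagonal, Matrix.diagonal_mul]
      simp [hC]
    rw [this]
    field_simp
  rw [hL, hCfact]
  have detE : E.det = 1 := by
    have htri : E.BlockTriangular OrderDual.toDual := by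
      intro i j hij
      have : i < j := hij
      have hlt : x i < x j := hxmono this
      have : ¬ x j ∣ x i := fun h => absurd (Nat.le_of_dvd (hxpos i) h) (by omega)
      simp [hE, this]
    rw [Matrix.det_of_lowerTriangular E htri]
    have : ∀ i, E i i = 1 := fun i => by simp [hE]
    simp [this]
  have detD : D.det = ∏ i, ((x i : ℕ) : ℚ) := Matrix.det_diagonal
  have detΔ : Δ.det = ∏ i, al S (x i) := Matrix.det_diagonal
  rw [Matrix.det_mul, Matrix.det_mul, Matrix.det_mul, Matrix.det_mul, Matrix.det_transpose, detE, detD, detΔ]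
  have h1 : (∏ i, ((x i : ℕ) : ℚ)) ≠ 0 :=
    Finset.prod_ne_zero_iff.mpr (fun i _ => by exact_mod_cast (hxpos i).ne')
  have h2 : (∏ i, al S (x i)) ≠ 0 :=
    Finset.prod_ne_zero_iff.mpr (fun i _ => alpha_ne S h0 hg hcard (hxS i))
  simp only [one_mul, mul_one]
  exact mul_ne_zero (mul_ne_zero h1 h2) h1
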